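/- arXiv:1503.07131 — 10 statements merged into one kernel-verified Lean document; each statement's English description precedes it below -/
import Mathlib

section
/- Let G be a connected non-bipartite simple graph and γ : V(G) → R any function. Then there exists a function ω : E(G) → R such that for every vertex v, the sum of ω(e) over all edges e incident to v equals γ(v). -/
/-- A connected non-bipartite simple graph admits a `γ`-ℝ-flow for every `γ : V → ℝ`. -/
theorem stmt_4 {V : Type*} [Fintype V] [DecidableEq V] (G : SimpleGraph V) [DecidableRel G.Adj]
    (hconn : G.Connected) (hnb : ¬ G.Colorable 2) (γ : V → ℝ) :
    ∃ ω : Sym2 V → ℝ, ∀ v, ∑ e ∈ G.incidenceFinset v, ω e = γ v := by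
  classical
  let f : (Sym2 V → ℝ) →ₗ[ℝ] (V → ℝ) :=
    { toFun := fun ω v => ∑ e ∈ G.incidenceFinset v, ω e
      map_add' := by intro a b; funext v; simp [Finset.sum_add_distrib]
      map_smul' := by intro r a; funext v; simp [Finset.mul_sum]
    }
  suffices hs : Function.Surjective f by
    obtain ⟨ω, hω⟩ := hs γ
    exact ⟨ω, fun v => congrFun hω v⟩
  rw [← LinearMap.range_eq_top]
  by_contra hlt
  obtain ⟨φ, hφ0, hφ⟩ := Submodule.exists_dual_map_eq_bot_of_lt_top
    (lt_top_iff_ne_top.mpr hlt) inferInstance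
  set c : V → ℝ := fun v => φ (Pi.single v 1) with hc
  have hsingle : ∀ v : V, (fun j => if v = j then (1 : ℝ) else 0) = Pi.single v 1 := by
    intro v
    funext j
    simp [Pi.single_apply, eq_comm]
  have hφsum : ∀ x : V → ℝ, φ x = ∑ v, x v * c v := by
    intro x
    have := LinearMap.pi_apply_eq_sum_univ φ x
    simp only [hsingle] at this
    simpa [smul_eq_mul] using this
  have hφrange : ∀ ω, φ (f ω) = 0 := by
    intro ω
    have h1 : f ω ∈ LinearMap.range f := ⟨ω, rfl⟩
    have h2 := Submodule.mem_map_of_mem (f := φ) h1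
    rw [hφ] at h2
    simpa using h2
  -- adjacent vertices have opposite values
  have hedge : ∀ u v, G.Adj u v → c u + c v = 0 := by
    intro u v huv
    have hne : u ≠ v := huv.ne
    have h0 := hφrange (fun e => if e = s(u, v) then (1 : ℝ) else 0)
    rw [hφsum] at h0
    have hfw : ∀ w, (f (fun e => if e = s(u, v) then (1 : ℝ) else 0)) w
        = if w = u ∨ w = v then (1 : ℝ) else 0 := by
      intro w
      show (∑ e ∈ G.incidenceFinset w, if e = s(u, v) then (1 : ℝ) else 0) = _
      rw [Finset.sum_ite_eq' (G.incidenceFinset w) (s(u, v)) (fun _ => (1 : ℝ))]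
      congr 1
      simp [SimpleGraph.mem_incidenceFinset, SimpleGraph.incidenceSet, huv,
        Sym2.mem_iff, eq_comm, or_comm]
    rw [show (∑ w, (f fun e => if e = s(u, v) then (1 : ℝ) else 0) w * c w)
        = ∑ w, (if w = u ∨ w = v then (1 : ℝ) else 0) * c w by
      exact Finset.sum_congr rfl fun w _ => by rw [hfw]] at h0
    have hsplit : ∀ w, ((if w = u ∨ w = v then (1 : ℝ) else 0) * c w)
        = (if w = u then c w else 0) + (if w = v then c w else 0) := by
      intro w
      by_cases h1 : w = u
      · subst h1; simp [hne]
      · by_cases h2 : w = v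
        · subst h2; simp [h1]
        · simp [h1, h2]
    rw [Finset.sum_congr rfl (fun w _ => hsplit w), Finset.sum_add_distrib] at h0
    simpa using h0
  -- |c| is constant on the connected graph
  have habs : ∀ u v : V, G.Reachable u v → |c u| = |c v| := by
    intro u v huv
    obtain ⟨w⟩ := huv
    induction w with
    | nil => rfl
    | cons h p ih =>
      rename_i a b d
      have : c a = -c b := by linarith [hedge a b h]
      rw [this, abs_neg]; exact ih
  -- c must be zero somewhere hence nonzero gives a 2-coloring
  have hex : ∃ v, c v ≠ 0 := by
    by_contra hall
    push_neg at hall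
    apply hφ0
    apply LinearMap.ext
    intro x
    rw [hφsum]
    simp [hall]
  obtain ⟨v₀, hv₀⟩ := hex
  have hallne : ∀ v, c v ≠ 0 := by
    intro v
    have := habs v₀ v (hconn.preconnected v₀ v)
    intro h
    rw [h, abs_zero] at this
    exact hv₀ (abs_eq_zero.mp this)
  apply hnb
  refine ⟨SimpleGraph.Coloring.mk (fun v => if 0 < c v then (0 : Fin 2) else 1) ?_⟩
  intro u v huv
  have h1 := hedge u v huv
  have h2 := hallne u
  have h3 := hallne v
  by_cases h : 0 < c u
  · have : ¬ 0 < c v := by intro h'; linarith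
    simp [h, this]
  · have : 0 < c v := by
      rcases lt_trichotomy (c u) 0 with h' | h' | h'
      · linarith
      · exact absurd h' h2
      · exact absurd h' h
    simp [h, this]
end

section
/- Let G be a connected non-bipartite simple graph and γ : V(G) → Z an integer-valued function. Then there exists ω : E(G) → R with 2ω(e) ∈ Z for every edge e, such that for every vertex v the sum of ω over edges incident to v equals γ(v). -/
open Finset

set_option linter.unusedSectionVars false

section Aux
variable {V : Type*} [Fintype V] [DecidableEq V] {G : SimpleGraph V} [DecidableRel G.Adj]

/-- alternating ±1 edge weighting along a walk -/
def wf : {a b : V} → G.Walk a b → Sym2 V → ℤ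
  | _, _, SimpleGraph.Walk.nil => fun _ => 0
  | a, _, SimpleGraph.Walk.cons (v := b) _ p => fun e => (if e = s(a, b) then 1 else 0) - wf p e

lemma wf_sum {a c : V} (w : G.Walk a c) (v : V) :
    ∑ e ∈ G.incidenceFinset v, wf w e =
      (if v = a then 1 else 0) - (-1) ^ w.length * (if v = c then 1 else 0) := by
  induction w with
  | nil => simp [wf]
  | @cons a b c h p ih =>
    simp only [wf, Finset.sum_sub_distrib, ih, SimpleGraph.Walk.length_cons]
    have h1 : ∑ e ∈ G.incidenceFinset v, (if e = s(a, b) then (1:ℤ) else 0) =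
        (if v = a then 1 else 0) + (if v = b then 1 else 0) := by
      rw [Finset.sum_ite_eq' (G.incidenceFinset v) (s(a,b)) (fun _ => (1:ℤ))]
      by_cases hva : v = a <;> by_cases hvb : v = b
      · exact absurd (hva.symm.trans hvb) h.ne
      · subst hva; simp [SimpleGraph.mem_incidenceFinset, G.mk'_mem_incidenceSet_iff, h, hvb]
      · subst hvb; simp [SimpleGraph.mem_incidenceFinset, SimpleGraph.mk'_mem_incidenceSet_right_iff, h, hva]
      · simp [SimpleGraph.mem_incidenceFinset, SimpleGraph.incidenceSet, hva, hvb]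
    rw [h1]; ring

lemma exists_odd_closed_walk (hconn : G.Connected) (hnb : ¬ G.Colorable 2) :
    ∃ (c : V) (w : G.Walk c c), Odd w.length := by
  by_contra hno
  push_neg at hno
  simp only [Nat.not_odd_iff_even] at hno
  have : Nonempty V := hconn.nonempty
  obtain ⟨r⟩ := this
  apply hnb
  have hcol : ∀ u v, G.Adj u v →
      decide (Odd ((hconn.preconnected r u).some.length)) ≠
        decide (Odd ((hconn.preconnected r v).some.length)) := by
    intro u v h
    set wu := (hconn.preconnected r u).some
    set wv := (hconn.preconnected r v).some
    have hev := hno r (wu.append (SimpleGraph.Walk.cons h wv.reverse))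
    rw [SimpleGraph.Walk.length_append, SimpleGraph.Walk.length_cons,
      SimpleGraph.Walk.length_reverse] at hev
    have : Odd wu.length ↔ ¬ Odd wv.length := by
      rcases hev with ⟨l, hl⟩
      constructor
      · rintro ⟨k, hk⟩ ⟨m, hm⟩; omega
      · intro hnv
        rcases Nat.not_odd_iff_even.1 hnv with ⟨m, hm⟩
        exact ⟨l - m - 1, by omega⟩
    by_cases hu : Odd wu.length <;> simp_all
  have C : G.Coloring Bool :=
    SimpleGraph.Coloring.mk
      (fun v => decide (Odd ((hconn.preconnected r v).some.length)))
      (fun h => hcol _ _ h)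
  simpa using C.colorable

end Aux

/-- A connected non-bipartite simple graph admits, for any integer-valued `γ`,
a `γ`-flow `ω` such that `2 ω(e)` is an integer for every edge `e`. -/
theorem stmt_5 {V : Type*} [Fintype V] [DecidableEq V] (G : SimpleGraph V) [DecidableRel G.Adj]
    (hconn : G.Connected) (hnb : ¬ G.Colorable 2) (γ : V → ℤ) :
    ∃ ω : Sym2 V → ℝ, (∀ e ∈ G.edgeSet, ∃ z : ℤ, 2 * ω e = (z : ℝ)) ∧
      ∀ v, ∑ e ∈ G.incidenceFinset v, ω e = (γ v : ℝ) := by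
  obtain ⟨c0, w0, hodd⟩ := exists_odd_closed_walk hconn hnb
  let Wk : (a : V) → G.Walk a a := fun a =>
    ((hconn.preconnected a c0).some).append
      (w0.append ((hconn.preconnected a c0).some.reverse))
  have hWlen : ∀ a, Odd (Wk a).length := by
    intro a
    simp only [Wk, SimpleGraph.Walk.length_append, SimpleGraph.Walk.length_reverse]
    rcases hodd with ⟨k, hk⟩
    exact ⟨(hconn.preconnected a c0).some.length + k, by omega⟩
  refine ⟨fun e => ∑ a : V, (γ a : ℝ) * ((wf (Wk a) e : ℝ) / 2), ?_, ?_⟩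
  · intro e _
    refine ⟨∑ a : V, γ a * wf (Wk a) e, ?_⟩
    rw [Finset.mul_sum]; push_cast
    apply Finset.sum_congr rfl; intro a _; ring
  · intro v
    have key : ∀ a : V, ∑ e ∈ G.incidenceFinset v, (wf (Wk a) e : ℝ) =
        2 * (if v = a then 1 else 0) := by
      intro a
      have h1 := wf_sum (Wk a) v
      rw [Odd.neg_one_pow (hWlen a)] at h1
      calc ∑ e ∈ G.incidenceFinset v, (wf (Wk a) e : ℝ)
          = ((∑ e ∈ G.incidenceFinset v, wf (Wk a) e : ℤ) : ℝ) := by push_cast; rfl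
        _ = 2 * (if v = a then 1 else 0) := by
            rw [h1]; split_ifs <;> norm_num
    rw [Finset.sum_comm]
    have hterm : ∀ a : V, ∑ e ∈ G.incidenceFinset v, (γ a : ℝ) * ((wf (Wk a) e : ℝ) / 2)
        = (γ a : ℝ) * (if v = a then 1 else 0) := by
      intro a
      rw [← Finset.mul_sum, ← Finset.sum_div, key a]
      ring
    simp only [hterm]
    simp [Finset.sum_ite_eq]
end

section
/- Let G be a connected bipartite simple graph with parts V_1 and V_2, and let γ : V(G) → R. Then there exists ω : E(G) → R whose sum over edges incident to each vertex v equals γ(v) if and only if Σ_{v∈V_1} γ(v) = Σ_{v∈V_2} γ(v). -/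
open Finset

/-- A connected bipartite simple graph with parts `V₁`, `V₁ᶜ` admits a `γ`-ℝ-flow if and only
if the sums of `γ` over the two parts agree. -/
theorem stmt_6 {V : Type*} [Fintype V] [DecidableEq V] (G : SimpleGraph V) [DecidableRel G.Adj]
    (V₁ : Finset V) (hconn : G.Connected)
    (hbip : ∀ u w, G.Adj u w → (u ∈ V₁ ↔ w ∉ V₁)) (γ : V → ℝ) :
    (∃ ω : Sym2 V → ℝ, ∀ v, ∑ e ∈ G.incidenceFinset v, ω e = γ v) ↔
      ∑ v ∈ V₁, γ v = ∑ v ∈ V₁ᶜ, γ v := by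
  classical
  set σ : V → ℝ := fun v => if v ∈ V₁ then 1 else -1 with hσ
  have hσadj : ∀ u w, G.Adj u w → σ w = -σ u := by
    intro u w h
    by_cases hu : u ∈ V₁
    · have hw := (hbip u w h).mp hu; simp [hσ, hu, hw]
    · have hw : w ∈ V₁ := by
        by_contra hw; exact hu ((hbip u w h).mpr hw)
      simp [hσ, hu, hw]
  -- the bipartition condition as an orthogonality condition
  have hcond : (∑ v ∈ V₁, γ v = ∑ v ∈ V₁ᶜ, γ v) ↔ ∑ v, σ v * γ v = 0 := by
    have hs : ∑ v, σ v * γ v = ∑ v ∈ V₁, γ v - ∑ v ∈ V₁ᶜ, γ v := by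
      rw [← Finset.sum_add_sum_compl V₁ (fun v => σ v * γ v)]
      have h1 : ∑ v ∈ V₁, σ v * γ v = ∑ v ∈ V₁, γ v :=
        Finset.sum_congr rfl (by intro v hv; simp [hσ, hv])
      have h2 : ∑ v ∈ V₁ᶜ, σ v * γ v = -∑ v ∈ V₁ᶜ, γ v := by
        rw [← Finset.sum_neg_distrib]
        exact Finset.sum_congr rfl (by intro v hv; simp [hσ, Finset.mem_compl.mp hv])
      rw [h1, h2]; ring
    rw [hs]; constructor <;> intro h <;> linarith
  constructor
  · -- forward direction
    rintro ⟨ω, hω⟩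
    rw [hcond]
    have : ∑ v, σ v * γ v
        = ∑ e ∈ G.edgeFinset, ∑ v ∈ univ, (if v ∈ e then σ v * ω e else 0) := by
      rw [Finset.sum_comm]
      refine Finset.sum_congr rfl fun v _ => ?_
      rw [← Finset.sum_filter, ← hω v, SimpleGraph.incidenceFinset_eq_filter, Finset.mul_sum]
    rw [this]
    refine Finset.sum_eq_zero fun e he => ?_
    induction e with
    | _ u w =>
      have hadj : G.Adj u w := (SimpleGraph.mem_edgeFinset.mp he)
      have hne : u ≠ w := hadj.ne
      have hfil : (univ.filter fun v => v ∈ s(u, w)) = {u, w} := by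
        ext x; simp [Sym2.mem_iff]
      rw [← Finset.sum_filter, hfil, Finset.sum_pair hne, hσadj u w hadj]
      ring
  · -- backward direction
    intro h
    have h0 : ∑ v, σ v * γ v = 0 := hcond.mp h
    let σE : EuclideanSpace ℝ V := WithLp.toLp 2 σ
    let γE : EuclideanSpace ℝ V := WithLp.toLp 2 γ
    -- the incidence linear map
    let B : EuclideanSpace ℝ (Sym2 V) →ₗ[ℝ] EuclideanSpace ℝ V :=
      { toFun := fun ω => WithLp.toLp 2 (fun v => ∑ e ∈ G.incidenceFinset v, ω e)
        map_add' := fun x y => PiLp.ext fun v => by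
          simp [Finset.sum_add_distrib]
        map_smul' := fun c x => PiLp.ext fun v => by
          simp [Finset.mul_sum] }
    have horth : (LinearMap.range B)ᗮ ≤ Submodule.span ℝ {σE} := by
      intro f hf
      have hedge : ∀ u w, G.Adj u w → f w = -f u := by
        intro u w huw
        have hz := (Submodule.mem_orthogonal _ f).mp hf (B (WithLp.toLp 2 (Pi.single s(u,w) 1))) ⟨_, rfl⟩
        rw [PiLp.inner_apply] at hz
        have hB : ∀ v, B (WithLp.toLp 2 (Pi.single s(u,w) 1)) v = if v = u ∨ v = w then 1 else 0 := by
          intro v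
          have : B (WithLp.toLp 2 (Pi.single s(u,w) 1)) v = if s(u,w) ∈ G.incidenceFinset v then (1:ℝ) else 0 := by
            simp [B, Finset.sum_pi_single']
          rw [this]
          congr 1
          rw [SimpleGraph.mem_incidenceFinset]
          simp [SimpleGraph.incidenceSet, huw, Sym2.mem_iff, eq_comm]
        simp_rw [hB, RCLike.inner_apply', conj_trivial, ite_mul, one_mul, zero_mul,
          ← Finset.sum_filter] at hz
        have hfil : (univ.filter fun v => v = u ∨ v = w) = {u, w} := by ext x; simp
        rw [hfil, Finset.sum_pair huw.ne] at hz
        linarith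
      -- f is determined along walks
      obtain ⟨v₀⟩ := hconn.nonempty
      set c : ℝ := σ v₀ * f v₀ with hc
      have hσsq : ∀ v, σ v * σ v = 1 := by
        intro v; by_cases hv : v ∈ V₁ <;> simp [hσ, hv]
      have hwalk : ∀ {a b : V}, G.Walk a b → f a = c * σ a → f b = c * σ b := by
        intro a b p
        induction p with
        | nil => exact id
        | cons hadj _ ih =>
          intro ha
          refine ih ?_
          rw [hedge _ _ hadj, hσadj _ _ hadj, ha]; ring
      have hbase : f v₀ = c * σ v₀ := by
        rw [hc]; linear_combination (-f v₀) * hσsq v₀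
      have hfc : f = c • σE := by
        refine PiLp.ext fun v => ?_
        obtain ⟨p⟩ := hconn v₀ v
        exact hwalk p hbase
      rw [hfc]
      exact Submodule.smul_mem _ _ (Submodule.mem_span_singleton_self _)
    have hrange : (Submodule.span ℝ {σE})ᗮ ≤ LinearMap.range B := by
      calc (Submodule.span ℝ {σE})ᗮ
          ≤ (LinearMap.range B)ᗮᗮ := Submodule.orthogonal_le horth
        _ = LinearMap.range B := Submodule.orthogonal_orthogonal _
    have hγmem : γE ∈ (Submodule.span ℝ {σE})ᗮ := by
      rw [Submodule.mem_orthogonal_singleton_iff_inner_right]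
      rw [PiLp.inner_apply]
      simpa [RCLike.inner_apply', σE, γE, mul_comm] using h0
    obtain ⟨ω, hω⟩ := hrange hγmem
    exact ⟨ω, fun v => congrArg (fun x : EuclideanSpace ℝ V => x v) hω⟩
end

section
/- Let G be a connected bipartite simple graph with parts V_1, V_2 and γ : V(G) → Z satisfying Σ_{v∈V_1} γ(v) = Σ_{v∈V_2} γ(v). Then there exists an integer-valued edge weighting ω : E(G) → Z whose sum over edges incident to each vertex v equals γ(v). -/
open Finset

def walkFlow {V : Type*} [DecidableEq V] {G : SimpleGraph V} :
    ∀ {a b : V}, G.Walk a b → Sym2 V → ℤ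
  | _, _, SimpleGraph.Walk.nil => 0
  | _, _, SimpleGraph.Walk.cons (u := a) (v := c) _ p =>
      fun e => (if e = s(a, c) then 1 else 0) - walkFlow p e

lemma sum_ind {V : Type*} [Fintype V] [DecidableEq V] {G : SimpleGraph V}
    [DecidableRel G.Adj] {x y : V} (h : G.Adj x y) (u : V) :
    ∑ e ∈ G.incidenceFinset u, (if e = s(x, y) then (1:ℤ) else 0) =
      if u = x ∨ u = y then 1 else 0 := by
  rw [Finset.sum_ite_eq' (G.incidenceFinset u) (s(x,y)) (fun _ => (1:ℤ))]
  simp [SimpleGraph.mem_incidenceFinset, SimpleGraph.incidenceSet, h, Sym2.mem_iff, eq_comm]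

lemma vertexSum_walkFlow {V : Type*} [Fintype V] [DecidableEq V] {G : SimpleGraph V}
    [DecidableRel G.Adj] {a b : V} (p : G.Walk a b) (u : V) :
    ∑ e ∈ G.incidenceFinset u, walkFlow p e =
      (if u = a then 1 else 0) - (-1 : ℤ) ^ p.length * (if u = b then 1 else 0) := by
  induction p with
  | nil => simp [walkFlow]
  | @cons a c b h q ih =>
      simp only [walkFlow, Finset.sum_sub_distrib, ih, sum_ind h u,
        SimpleGraph.Walk.length_cons, pow_succ]
      have hac : a ≠ c := h.ne
      by_cases hua : u = a <;> by_cases huc : u = c <;>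
        simp_all <;> split_ifs <;> ring

lemma parity_walk {V : Type*} [DecidableEq V] {G : SimpleGraph V} (V₁ : Finset V)
    (hbip : ∀ u w, G.Adj u w → (u ∈ V₁ ↔ w ∉ V₁)) {a b : V} (p : G.Walk a b) :
    ((-1 : ℤ)) ^ p.length = if (a ∈ V₁ ↔ b ∈ V₁) then 1 else -1 := by
  induction p with
  | nil => simp
  | @cons a c b h q ih =>
      have hac := hbip a c h
      simp only [SimpleGraph.Walk.length_cons, pow_succ, ih]
      by_cases h1 : a ∈ V₁ <;> by_cases h2 : c ∈ V₁ <;> by_cases h3 : b ∈ V₁ <;>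
        simp_all

/-- A connected bipartite simple graph admits an integer-valued `γ`-flow for any integer-valued
`γ` whose sums over the two parts agree. -/
theorem stmt_7 {V : Type*} [Fintype V] [DecidableEq V] (G : SimpleGraph V) [DecidableRel G.Adj]
    (V₁ : Finset V) (hconn : G.Connected)
    (hbip : ∀ u w, G.Adj u w → (u ∈ V₁ ↔ w ∉ V₁)) (γ : V → ℤ)
    (hγ : ∑ v ∈ V₁, γ v = ∑ v ∈ V₁ᶜ, γ v) :
    ∃ ω : Sym2 V → ℤ, ∀ v, ∑ e ∈ G.incidenceFinset v, ω e = γ v := by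
  classical
  have hne : Nonempty V := hconn.nonempty
  obtain ⟨r⟩ := hne
  let p : ∀ v : V, G.Walk v r := fun v => (hconn.preconnected v r).some
  refine ⟨fun e => ∑ v ∈ univ.erase r, γ v * walkFlow (p v) e, fun u => ?_⟩
  rw [Finset.sum_comm]
  simp only [← Finset.mul_sum, vertexSum_walkFlow, parity_walk V₁ hbip]
  by_cases hur : u = r
  · subst hur
    have hterm : ∀ v ∈ univ.erase u,
        γ v * ((if u = v then (1:ℤ) else 0) - (if (v ∈ V₁ ↔ u ∈ V₁) then 1 else -1) *
          (if u = u then 1 else 0)) = if (v ∈ V₁ ↔ u ∈ V₁) then -γ v else γ v := by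
      intro v hv
      rw [Finset.mem_erase] at hv
      rw [if_neg (fun h => hv.1 h.symm), if_pos rfl]
      split_ifs <;> ring
    rw [Finset.sum_congr rfl hterm,
      Finset.sum_erase_eq_sub (Finset.mem_univ u)]
    have hsum : ∑ v, (if (v ∈ V₁ ↔ u ∈ V₁) then -γ v else γ v) = 0 := by
      rw [Finset.sum_ite]
      have h1 : univ.filter (fun v => (v ∈ V₁ ↔ u ∈ V₁)) =
          if u ∈ V₁ then V₁ else V₁ᶜ := by
        split_ifs with hu <;> ext v <;> simp [hu]
      have h2 : univ.filter (fun v => ¬(v ∈ V₁ ↔ u ∈ V₁)) =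
          if u ∈ V₁ then V₁ᶜ else V₁ := by
        split_ifs with hu <;> ext v <;> simp [hu]
      rw [h1, h2]
      split_ifs <;> simp [Finset.sum_neg_distrib] <;> linarith [hγ]
    rw [hsum]
    simp
  · have hterm : ∀ v ∈ univ.erase r,
        γ v * ((if u = v then (1:ℤ) else 0) - (if (v ∈ V₁ ↔ r ∈ V₁) then 1 else -1) *
          (if u = r then 1 else 0)) = if v = u then γ v else 0 := by
      intro v _
      rw [if_neg hur]
      by_cases h : u = v <;> simp [h, eq_comm]
    rw [Finset.sum_congr rfl hterm, Finset.sum_ite_eq' (univ.erase r) u γ]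
    simp [Finset.mem_erase, hur]
end

section
/- Let T be a tree which is a balanced bipartite graph (both parts of the bipartition have equal size). Then the unique 1-sum flow on T is integer-valued, and assigns value 1 to every edge incident to a leaf. -/
open SimpleGraph Finset

section aux
set_option linter.unusedSectionVars false
variable {V : Type*} [Fintype V] [DecidableEq V] {T : SimpleGraph V} [DecidableRel T.Adj]

open Classical in
noncomputable def sideA (T : SimpleGraph V) (v w : V) : Finset V :=
  Finset.univ.filter (fun u => (T.deleteEdges {s(v,w)}).Reachable v u)

lemma mem_sideA {v w u : V} :
    u ∈ sideA T v w ↔ (T.deleteEdges {s(v,w)}).Reachable v u := by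
  classical simp [sideA]

lemma self_mem_sideA {v w : V} : v ∈ sideA T v w := mem_sideA.2 (Reachable.refl v)

lemma not_mem_sideA (hac : T.IsAcyclic) {v w : V} (h : T.Adj v w) : w ∉ sideA T v w := by
  have hb := (isAcyclic_iff_forall_adj_isBridge.mp hac) h
  rw [isBridge_iff] at hb
  rw [mem_sideA]
  exact hb

lemma adj_mem_sideA {v w u x : V} (h : u ∈ sideA T v w) (ha : T.Adj u x)
    (hne : s(u,x) ≠ s(v,w)) : x ∈ sideA T v w := by
  rw [mem_sideA] at h ⊢
  exact h.trans (Adj.reachable (by simp [hne, ha]))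

lemma sideA_subset {v w a b : V} (ha : a ∈ sideA T v w)
    (hv : v ∉ sideA T a b) : sideA T a b ⊆ sideA T v w := by
  intro u hu
  obtain ⟨p⟩ := mem_sideA.1 hu
  have he : s(v, w) ∉ p.edges := by
    intro h
    have hvs : v ∈ p.support := p.fst_mem_support_of_mem_edges h
    exact hv (mem_sideA.2 ⟨p.takeUntil v hvs⟩)
  have hsub : ∀ e ∈ p.edges, e ∈ (T.deleteEdges {s(v,w)}).edgeSet := by
    intro e hep
    have h1 : e ∈ (T.deleteEdges {s(a,b)}).edgeSet := p.edges_subset_edgeSet hep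
    rw [edgeSet_deleteEdges] at h1 ⊢
    exact ⟨h1.1, by rintro rfl; exact he hep⟩
  have : (T.deleteEdges {s(v,w)}).Reachable a u := ⟨p.transfer _ hsub⟩
  exact mem_sideA.2 ((mem_sideA.1 ha).trans this)

open Classical in
noncomputable def insideE (T : SimpleGraph V) [Fintype T.edgeSet] (v w : V) : Finset (Sym2 V) :=
  T.edgeFinset.filter (fun f => ∀ x ∈ f, x ∈ sideA T v w)

lemma mem_insideE {v w : V} {f : Sym2 V} :
    f ∈ insideE T v w ↔ f ∈ T.edgeFinset ∧ ∀ x ∈ f, x ∈ sideA T v w := by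
  classical simp [insideE]

lemma per_edge (hac : T.IsAcyclic) (ω : Sym2 V → ℝ) {v w : V} (hvw : T.Adj v w)
    {a b : V} (hab : T.Adj a b) :
    (∑ u ∈ sideA T v w, if u ∈ s(a,b) then ω s(a,b) else 0)
      = (if s(a,b) = s(v,w) then ω s(a,b) else 0)
        + (if s(a,b) ∈ insideE T v w then 2 * ω s(a,b) else 0) := by
  classical
  set A := sideA T v w with hA
  have hsum : (∑ u ∈ A, if u ∈ s(a,b) then ω s(a,b) else 0)
      = ((A.filter (fun u => u ∈ s(a,b))).card : ℝ) * ω s(a,b) := by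
    rw [Finset.sum_ite, Finset.sum_const_zero, add_zero, Finset.sum_const, nsmul_eq_mul]
  by_cases hcase : s(a,b) = s(v,w)
  · have hwA : w ∉ A := not_mem_sideA hac hvw
    have hfilt : A.filter (fun u => u ∈ s(a,b)) = {v} := by
      ext u
      simp only [Finset.mem_filter, Finset.mem_singleton, hcase, Sym2.mem_iff]
      constructor
      · rintro ⟨huA, rfl | rfl⟩
        · rfl
        · exact absurd huA hwA
      · rintro rfl; exact ⟨self_mem_sideA, Or.inl rfl⟩
    have hni : s(a,b) ∉ insideE T v w := by
      rw [mem_insideE]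
      rintro ⟨-, h⟩
      exact hwA (h w (by rw [hcase]; simp))
    rw [hsum, hfilt, if_pos hcase, if_neg hni]
    simp
  · rw [if_neg hcase]
    by_cases haA : a ∈ A
    · have hbA : b ∈ A := adj_mem_sideA haA hab hcase
      have hfilt : A.filter (fun u => u ∈ s(a,b)) = {a, b} := by
        ext u
        simp only [Finset.mem_filter, Finset.mem_insert, Finset.mem_singleton, Sym2.mem_iff]
        constructor
        · rintro ⟨-, h⟩; exact h
        · rintro (rfl | rfl)
          · exact ⟨haA, Or.inl rfl⟩
          · exact ⟨hbA, Or.inr rfl⟩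
      have hin : s(a,b) ∈ insideE T v w := by
        rw [mem_insideE]
        refine ⟨by simpa [mem_edgeFinset] using hab, ?_⟩
        intro x hx
        rw [Sym2.mem_iff] at hx
        rcases hx with rfl | rfl
        · exact haA
        · exact hbA
      rw [hsum, hfilt, if_pos hin, Finset.card_insert_of_notMem (by simp [hab.ne]),
        Finset.card_singleton]
      push_cast
      ring
    · have hbA : b ∉ A := by
        intro hbA
        exact haA (adj_mem_sideA hbA hab.symm (by rw [Sym2.eq_swap]; exact hcase))
      have hfilt : A.filter (fun u => u ∈ s(a,b)) = ∅ := by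
        ext u
        simp only [Finset.mem_filter, Finset.notMem_empty, iff_false, Sym2.mem_iff]
        rintro ⟨huA, rfl | rfl⟩
        · exact haA huA
        · exact hbA huA
      have hni : s(a,b) ∉ insideE T v w := by
        rw [mem_insideE]
        rintro ⟨-, h⟩
        exact haA (h a (by simp))
      rw [hsum, hfilt, if_neg hni]
      simp

lemma flow_eq (hac : T.IsAcyclic) (ω : Sym2 V → ℝ)
    (hflow : ∀ v, ∑ e ∈ T.incidenceFinset v, ω e = 1) {v w : V} (hvw : T.Adj v w) :
    ω s(v,w) = ((sideA T v w).card : ℝ) - 2 * ∑ f ∈ insideE T v w, ω f := by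
  classical
  set A := sideA T v w with hA
  have h1 : ∑ u ∈ A, ∑ e ∈ T.incidenceFinset u, ω e = (A.card : ℝ) := by
    rw [Finset.sum_congr rfl (fun u _ => hflow u)]
    simp
  have h2 : ∀ u : V, ∑ e ∈ T.incidenceFinset u, ω e
      = ∑ e ∈ T.edgeFinset, if u ∈ e then ω e else 0 := by
    intro u
    rw [incidenceFinset_eq_filter, Finset.sum_filter]
  rw [Finset.sum_congr rfl (fun u _ => h2 u), Finset.sum_comm] at h1
  have h3 : ∀ e ∈ T.edgeFinset, (∑ u ∈ A, if u ∈ e then ω e else 0)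
      = (if e = s(v,w) then ω e else 0) + (if e ∈ insideE T v w then 2 * ω e else 0) := by
    intro e
    induction e with
    | h a b =>
      intro he
      exact per_edge hac ω hvw (by rwa [mem_edgeFinset, mem_edgeSet] at he)
  rw [Finset.sum_congr rfl h3, Finset.sum_add_distrib, Finset.sum_ite_eq' T.edgeFinset s(v,w),
    if_pos (by rwa [mem_edgeFinset, mem_edgeSet]), Finset.sum_ite_mem,
    Finset.inter_eq_right.mpr (fun f hf => (mem_insideE.1 hf).1), ← Finset.mul_sum] at h1
  linarith

lemma sum_int {α : Type*} {s : Finset α} {g : α → ℝ} (h : ∀ x ∈ s, ∃ z : ℤ, g x = z) :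
    ∃ z : ℤ, ∑ x ∈ s, g x = z := by
  classical
  induction s using Finset.induction_on with
  | empty => exact ⟨0, by simp⟩
  | insert _ _ hx ih =>
    obtain ⟨z1, hz1⟩ := h _ (Finset.mem_insert_self _ _)
    obtain ⟨z2, hz2⟩ := ih (fun x hxs => h x (Finset.mem_insert_of_mem hxs))
    exact ⟨z1 + z2, by rw [Finset.sum_insert hx, hz1, hz2]; push_cast; ring⟩

lemma int_on_edges (hac : T.IsAcyclic) (ω : Sym2 V → ℝ)
    (hflow : ∀ v, ∑ e ∈ T.incidenceFinset v, ω e = 1) :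
    ∀ n : ℕ, ∀ v w : V, T.Adj v w → (sideA T v w).card ≤ n → ∃ z : ℤ, ω s(v,w) = z := by
  intro n
  induction n with
  | zero =>
    intro v w hvw hc
    have := Finset.card_pos.mpr (⟨v, self_mem_sideA⟩ : (sideA T v w).Nonempty)
    omega
  | succ n ih =>
    intro v w hvw hc
    have key : ∀ f ∈ insideE T v w, ∃ z : ℤ, ω f = z := by
      intro f
      induction f with
      | h a b =>
        intro hf
        obtain ⟨hfe, hall⟩ := mem_insideE.1 hf
        have hab : T.Adj a b := by rwa [mem_edgeFinset, mem_edgeSet] at hfe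
        have haA : a ∈ sideA T v w := hall a (by simp)
        have hbA : b ∈ sideA T v w := hall b (by simp)
        have hor : ∃ x y : V, T.Adj x y ∧ s(x,y) = s(a,b) ∧ x ∈ sideA T v w ∧
            v ∉ sideA T x y := by
          by_cases hv : v ∈ sideA T a b
          · refine ⟨b, a, hab.symm, Sym2.eq_swap, hbA, ?_⟩
            intro hv2
            rw [mem_sideA, show s(b,a) = s(a,b) from Sym2.eq_swap] at hv2
            have hreach : (T.deleteEdges {s(a,b)}).Reachable a b :=
              (mem_sideA.1 hv).trans hv2.symm
            exact not_mem_sideA hac hab (mem_sideA.2 hreach)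
          · exact ⟨a, b, hab, rfl, haA, hv⟩
        obtain ⟨x, y, hxy, hsym, hxA, hvn⟩ := hor
        have hsub : sideA T x y ⊆ sideA T v w := sideA_subset hxA hvn
        have hlt : (sideA T x y).card < (sideA T v w).card :=
          Finset.card_lt_card ((Finset.ssubset_iff_of_subset hsub).2 ⟨v, self_mem_sideA, hvn⟩)
        obtain ⟨z, hz⟩ := ih x y hxy (by omega)
        exact ⟨z, by rw [← hsym]; exact hz⟩
    obtain ⟨zs, hzs⟩ := sum_int key
    refine ⟨(sideA T v w).card - 2 * zs, ?_⟩
    rw [flow_eq hac ω hflow hvw, hzs]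
    push_cast
    ring

end aux

/-- On a balanced bipartite tree, the (unique) 1-sum flow is integer-valued and assigns the
value `1` to every edge incident to a leaf. -/
theorem stmt_8 {V : Type*} [Fintype V] [DecidableEq V] (T : SimpleGraph V) [DecidableRel T.Adj]
    (htree : T.IsTree) (V₁ : Finset V)
    (hbip : ∀ u w, T.Adj u w → (u ∈ V₁ ↔ w ∉ V₁)) (hbal : V₁.card = V₁ᶜ.card)
    (ω : Sym2 V → ℝ) (hsupp : ∀ e ∉ T.edgeSet, ω e = 0)
    (hflow : ∀ v, ∑ e ∈ T.incidenceFinset v, ω e = 1) :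
    (∀ e ∈ T.edgeSet, ∃ z : ℤ, ω e = (z : ℝ)) ∧
      ∀ v w, T.Adj v w → T.degree v = 1 → ω s(v, w) = 1 := by
  classical
  have hac := htree.2
  constructor
  · intro e he
    induction e with
    | h a b =>
      have hab : T.Adj a b := (T.mem_edgeSet).1 he
      exact int_on_edges hac ω hflow (sideA T a b).card a b hab le_rfl
  · intro v w hvw hdeg
    have hcard : (T.incidenceFinset v).card = 1 := by
      rw [card_incidenceFinset_eq_degree]
      exact hdeg
    obtain ⟨e0, he0⟩ := Finset.card_eq_one.1 hcard
    have hmem : s(v,w) ∈ T.incidenceFinset v := by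
      rw [mem_incidenceFinset]
      exact (T.mem_incidenceSet v w).2 hvw
    rw [he0, Finset.mem_singleton] at hmem
    have hsum := hflow v
    rw [he0, Finset.sum_singleton, ← hmem] at hsum
    exact hsum
end

section
/- Let T be a tree on n ≥ 4 vertices that is a balanced bipartite graph, with bipartition V_1 ∪ V_2, |V_1| = |V_2|. Then both V_1 and V_2 contain a leaf of T. -/
open Finset

lemma side_sum_degree {V : Type*} [Fintype V] [DecidableEq V] (T : SimpleGraph V)
    [DecidableRel T.Adj] (S : Finset V) (hb : ∀ u w, T.Adj u w → (u ∈ S ↔ w ∉ S)) :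
    ∑ v ∈ S, T.degree v = T.edgeFinset.card := by
  classical
  simp only [SimpleGraph.degree]
  rw [← Finset.card_sigma]
  apply Finset.card_bij (fun p _ => s(p.1, p.2))
  · rintro ⟨v, w⟩ hp
    simp only [Finset.mem_sigma, SimpleGraph.mem_neighborFinset] at hp
    simpa [SimpleGraph.mem_edgeFinset] using hp.2
  · rintro ⟨v, w⟩ hp ⟨v', w'⟩ hp' h
    simp only [Finset.mem_sigma, SimpleGraph.mem_neighborFinset] at hp hp'
    rw [Sym2.eq_iff] at h
    rcases h with h | h
    · simpa using h
    · exfalso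
      simp only [Prod.swap_prod_mk, Prod.mk.injEq] at h
      have hw' : w' ∉ S := ((hb v' w' hp'.2).mp hp'.1)
      exact hw' (h.1 ▸ hp.1)
  · intro e he
    rw [SimpleGraph.mem_edgeFinset] at he
    induction e with
    | h u w =>
      have hadj : T.Adj u w := he
      by_cases hu : u ∈ S
      · exact ⟨⟨u, w⟩, by simp [hu, hadj], rfl⟩
      · have hw : w ∈ S := by
          by_contra hw
          exact hu ((hb u w hadj).mpr hw)
        exact ⟨⟨w, u⟩, by simp [hw, hadj.symm], Sym2.eq_swap⟩

lemma leaf_in_side {V : Type*} [Fintype V] [DecidableEq V] (T : SimpleGraph V)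
    [DecidableRel T.Adj] (htree : T.IsTree) (hn : 4 ≤ Fintype.card V) (S : Finset V)
    (hb : ∀ u w, T.Adj u w → (u ∈ S ↔ w ∉ S)) (hcard : 2 * S.card = Fintype.card V) :
    ∃ v ∈ S, T.degree v = 1 := by
  classical
  have hnt : Nontrivial V := Fintype.one_lt_card_iff_nontrivial.mp (by omega)
  have hdegpos : ∀ v : V, 0 < T.degree v := by
    intro v
    rw [SimpleGraph.degree_pos_iff_exists_adj]
    obtain ⟨w, hw⟩ := exists_ne v
    obtain ⟨p⟩ := htree.isConnected.preconnected v w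
    exact ⟨p.getVert 1, p.adj_snd (SimpleGraph.Walk.not_nil_of_ne (Ne.symm hw))⟩
  by_contra h
  push_neg at h
  have hge : ∀ v ∈ S, 2 ≤ T.degree v := by
    intro v hv
    have := hdegpos v
    have := h v hv
    omega
  have hsum : 2 * S.card ≤ ∑ v ∈ S, T.degree v := by
    calc 2 * S.card = ∑ _v ∈ S, 2 := by rw [Finset.sum_const]; ring
    _ ≤ ∑ v ∈ S, T.degree v := Finset.sum_le_sum hge
  rw [side_sum_degree T S hb] at hsum
  have hedge := htree.card_edgeFinset
  omega

/-- A balanced bipartite tree on at least 4 vertices has a leaf in each part of the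
bipartition. -/
theorem stmt_9 {V : Type*} [Fintype V] [DecidableEq V] (T : SimpleGraph V) [DecidableRel T.Adj]
    (htree : T.IsTree) (hn : 4 ≤ Fintype.card V) (V₁ : Finset V)
    (hbip : ∀ u w, T.Adj u w → (u ∈ V₁ ↔ w ∉ V₁)) (hbal : V₁.card = V₁ᶜ.card) :
    (∃ v ∈ V₁, T.degree v = 1) ∧ (∃ v ∈ V₁ᶜ, T.degree v = 1) := by
  have hcards : V₁.card + V₁ᶜ.card = Fintype.card V := Finset.card_add_card_compl V₁
  have hbip' : ∀ u w, T.Adj u w → (u ∈ V₁ᶜ ↔ w ∉ V₁ᶜ) := by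
    intro u w h
    have := hbip u w h
    simp only [Finset.mem_compl]
    tauto
  exact ⟨leaf_in_side T htree hn V₁ hbip (by omega),
    leaf_in_side T htree hn V₁ᶜ hbip' (by omega)⟩
end

section
/- Let G be a non-bipartite graph. Then G admits a 1-sum flow with all values in [0,1] if and only if G has a {1,2}-factor, i.e., a spanning subgraph each of whose connected components is either a single edge K_2 or a cycle. -/
open Finset in
lemma incidenceFinset_eq_image {V : Type*} [Fintype V] [DecidableEq V] (G : SimpleGraph V)
    [DecidableRel G.Adj] (v : V) :
    G.incidenceFinset v = (G.neighborFinset v).image (fun u => s(v, u)) := by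
  ext e
  refine e.ind (fun a b => ?_)
  simp only [SimpleGraph.mem_incidenceFinset, SimpleGraph.mk'_mem_incidenceSet_iff,
    Finset.mem_image, SimpleGraph.mem_neighborFinset]
  constructor
  · rintro ⟨hab, rfl | rfl⟩
    · exact ⟨b, hab, rfl⟩
    · exact ⟨a, hab.symm, Sym2.eq_swap⟩
  · rintro ⟨u, hu, he⟩
    rw [Sym2.eq_iff] at he
    rcases he with ⟨rfl, rfl⟩ | ⟨rfl, rfl⟩
    · exact ⟨hu, Or.inl rfl⟩
    · exact ⟨hu.symm, Or.inr rfl⟩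

lemma sum_incidenceFinset_eq {V : Type*} [Fintype V] [DecidableEq V] (G : SimpleGraph V)
    [DecidableRel G.Adj] (f : Sym2 V → ℝ) (v : V) :
    ∑ e ∈ G.incidenceFinset v, f e = ∑ u ∈ G.neighborFinset v, f s(v, u) := by
  rw [incidenceFinset_eq_image, Finset.sum_image]
  intro a _ b _ h
  exact Sym2.congr_right.mp h

lemma backward_dir {V : Type*} [Fintype V] [DecidableEq V] (G : SimpleGraph V)
    [DecidableRel G.Adj] (H : SimpleGraph V) (hle : H ≤ G)
    (hdeg : ∀ v, (H.neighborSet v).ncard = 1 ∨ (H.neighborSet v).ncard = 2)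
    (hmatch : ∀ v w, H.Adj v w → (H.neighborSet v).ncard = 1 → (H.neighborSet w).ncard = 1) :
    ∃ ω : Sym2 V → ℝ, (∀ e ∉ G.edgeSet, ω e = 0) ∧ (∀ e ∈ G.edgeSet, 0 ≤ ω e ∧ ω e ≤ 1) ∧
      ∀ v, ∑ e ∈ G.incidenceFinset v, ω e = 1 := by
  classical
  set g : V → V → ℝ := fun a b =>
    if H.Adj a b then
      (if (H.neighborSet a).ncard = 1 ∨ (H.neighborSet b).ncard = 1 then 1 else 1/2)
    else 0 with hg
  have hsymm : ∀ a b, g a b = g b a := by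
    intro a b
    by_cases h : H.Adj a b
    · simp [hg, h, h.symm, or_comm]
    · have h' : ¬ H.Adj b a := fun h' => h h'.symm
      simp only [hg]
      rw [if_neg h, if_neg h']
  refine ⟨fun e => Sym2.lift ⟨g, hsymm⟩ e, ?_, ?_, ?_⟩
  · intro e he
    refine e.ind (fun a b hab => ?_) he
    simp only [Sym2.lift_mk]
    have : ¬ H.Adj a b := fun h => hab (hle h)
    simp [hg, this]
  · intro e _
    refine e.ind (fun a b => ?_)
    simp only [Sym2.lift_mk, hg]
    split <;> [skip; norm_num] <;> split <;> norm_num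
  · intro v
    rw [sum_incidenceFinset_eq]
    simp only [Sym2.lift_mk]
    rcases hdeg v with h1 | h2
    · obtain ⟨u₀, hu⟩ := Set.ncard_eq_one.mp h1
      have hadj : H.Adj v u₀ := by
        have : u₀ ∈ H.neighborSet v := hu ▸ rfl
        exact this
      rw [Finset.sum_eq_single_of_mem u₀ ((SimpleGraph.mem_neighborFinset _ _ _).mpr (hle hadj))
        ?_]
      · simp only [hg]
        rw [if_pos hadj, if_pos (Or.inl h1)]
      · intro u _ hne
        have hnadj : ¬ H.Adj v u := by
          intro h
          exact hne (by have : u ∈ H.neighborSet v := h; rw [hu] at this; exact this)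
        simp only [hg]
        rw [if_neg hnadj]
    · obtain ⟨a, b, hab, hset⟩ := Set.ncard_eq_two.mp h2
      have ha : H.Adj v a := by
        have : a ∈ H.neighborSet v := by rw [hset]; exact Set.mem_insert _ _
        exact this
      have hb : H.Adj v b := by
        have : b ∈ H.neighborSet v := by rw [hset]; exact Set.mem_insert_of_mem _ rfl
        exact this
      have hval : ∀ c, H.Adj v c → g v c = 1/2 := by
        intro c hc
        have hnc : ¬ (H.neighborSet c).ncard = 1 := by
          intro h
          have := hmatch c v hc.symm h
          omega
        have hnv : ¬ (H.neighborSet v).ncard = 1 := by omega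
        have hor : ¬((H.neighborSet v).ncard = 1 ∨ (H.neighborSet c).ncard = 1) := by tauto
        simp only [hg]
        rw [if_pos hc, if_neg hor]
      have hsub : ({a, b} : Finset V) ⊆ G.neighborFinset v := by
        intro u hu
        rcases Finset.mem_insert.mp hu with rfl | hu
        · exact (SimpleGraph.mem_neighborFinset _ _ _).mpr (hle ha)
        · rw [Finset.mem_singleton] at hu
          subst hu
          exact (SimpleGraph.mem_neighborFinset _ _ _).mpr (hle hb)
      rw [← Finset.sum_subset hsub ?_]
      · rw [Finset.sum_pair hab, hval a ha, hval b hb]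
        norm_num
      · intro u _ hu
        have : ¬ H.Adj v u := by
          intro h
          have : u ∈ H.neighborSet v := h
          rw [hset] at this
          rcases this with rfl | rfl
          · exact hu (Finset.mem_insert_self _ _)
          · exact hu (by simp)
        simp only [hg]
        rw [if_neg this]

lemma forward_dir {V : Type*} [Fintype V] [DecidableEq V] (G : SimpleGraph V)
    [DecidableRel G.Adj] (ω : Sym2 V → ℝ)
    (h0 : ∀ e ∉ G.edgeSet, ω e = 0) (hbd : ∀ e ∈ G.edgeSet, 0 ≤ ω e ∧ ω e ≤ 1)
    (hsum : ∀ v, ∑ e ∈ G.incidenceFinset v, ω e = 1) :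
    ∃ H : SimpleGraph V, H ≤ G ∧
      (∀ v, (H.neighborSet v).ncard = 1 ∨ (H.neighborSet v).ncard = 2) ∧
      (∀ v w, H.Adj v w → (H.neighborSet v).ncard = 1 → (H.neighborSet w).ncard = 1) := by
  classical
  have hnbr : ∀ v, ∑ u ∈ G.neighborFinset v, ω s(v, u) = 1 := by
    intro v
    rw [← sum_incidenceFinset_eq]
    exact hsum v
  have hnn : ∀ v u, 0 ≤ ω s(v, u) := by
    intro v u
    by_cases h : G.Adj v u
    · exact (hbd _ ((SimpleGraph.mem_edgeSet _).mpr h)).1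
    · rw [h0 _ (fun hc => h ((SimpleGraph.mem_edgeSet _).mp hc))]
  -- Hall's condition
  have hall : ∀ s : Finset V, s.card ≤ (s.biUnion (fun x => G.neighborFinset x)).card := by
    intro s
    have key : (s.card : ℝ) ≤ ((s.biUnion (fun x => G.neighborFinset x)).card : ℝ) := by
      set T := s.biUnion (fun x => G.neighborFinset x) with hT
      calc (s.card : ℝ) = ∑ v ∈ s, (1 : ℝ) := by simp
        _ = ∑ v ∈ s, ∑ u ∈ G.neighborFinset v, ω s(v, u) := by
            refine Finset.sum_congr rfl fun v _ => (hnbr v).symm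
        _ = ∑ v ∈ s, ∑ u ∈ T, (if G.Adj v u then ω s(v, u) else 0) := by
            refine Finset.sum_congr rfl fun v hv => ?_
            rw [← Finset.sum_filter]
            congr 1
            ext u
            simp only [Finset.mem_filter, SimpleGraph.mem_neighborFinset, hT,
              Finset.mem_biUnion]
            constructor
            · intro h
              exact ⟨⟨v, hv, h⟩, h⟩
            · exact fun h => h.2
        _ = ∑ u ∈ T, ∑ v ∈ s, (if G.Adj v u then ω s(v, u) else 0) := Finset.sum_comm
        _ ≤ ∑ u ∈ T, (1 : ℝ) := by
            refine Finset.sum_le_sum fun u _ => ?_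
            calc ∑ v ∈ s, (if G.Adj v u then ω s(v, u) else 0)
                = ∑ v ∈ s.filter (fun v => G.Adj v u), ω s(v, u) := by
                  rw [← Finset.sum_filter]
              _ ≤ ∑ v ∈ G.neighborFinset u, ω s(v, u) := by
                  refine Finset.sum_le_sum_of_subset_of_nonneg ?_ fun v _ _ => ?_
                  · intro v hv
                    rw [Finset.mem_filter] at hv
                    exact (SimpleGraph.mem_neighborFinset _ _ _).mpr hv.2.symm
                  · rw [Sym2.eq_swap]
                    exact hnn u v
              _ = ∑ v ∈ G.neighborFinset u, ω s(u, v) := by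
                  refine Finset.sum_congr rfl fun v _ => by rw [Sym2.eq_swap]
              _ = 1 := hnbr u
        _ = ((T.card : ℝ)) := by simp
    exact_mod_cast key
  obtain ⟨f, hinj, hf⟩ := (Finset.all_card_le_biUnion_card_iff_exists_injective
    (fun x => G.neighborFinset x)).mp hall
  have hadj : ∀ v, G.Adj v (f v) := fun v => (SimpleGraph.mem_neighborFinset _ _ _).mp (hf v)
  have hbij : Function.Bijective f := Finite.injective_iff_bijective.mp hinj
  set e : V ≃ V := Equiv.ofBijective f hbij with he
  have hadje : ∀ v, G.Adj v (e v) := hadj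
  have hsymmH : ∀ u w : V, (w = e u ∨ u = e w) → (u = e w ∨ w = e u) := fun u w h => h.symm
  have hloopH : ∀ v : V, ¬ (v = e v ∨ v = e v) := by
    intro v h
    have hv := hadje v
    rcases h with h | h <;> rw [← h] at hv <;> exact G.irrefl hv
  set H : SimpleGraph V :=
    ⟨fun u w => w = e u ∨ u = e w, ⟨fun u w h => hsymmH u w h⟩, ⟨fun v h => hloopH v h⟩⟩
    with hH
  have hHadj : ∀ u w, H.Adj u w ↔ (w = e u ∨ u = e w) := fun u w => Iff.rfl
  have hnbrset : ∀ v, H.neighborSet v = {e v, e.symm v} := by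
    intro v
    ext w
    simp only [SimpleGraph.mem_neighborSet, Set.mem_insert_iff, Set.mem_singleton_iff, hHadj]
    constructor
    · rintro (rfl | h)
      · exact Or.inl rfl
      · exact Or.inr (by rw [h, Equiv.symm_apply_apply])
    · rintro (rfl | rfl)
      · exact Or.inl rfl
      · exact Or.inr (Equiv.apply_symm_apply e v).symm
  have hdeg : ∀ v, (H.neighborSet v).ncard = 1 ∨ (H.neighborSet v).ncard = 2 := by
    intro v
    rw [hnbrset v]
    by_cases h : e v = e.symm v
    · left
      rw [h, Set.pair_eq_singleton, Set.ncard_singleton]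
    · right
      exact Set.ncard_pair h
  refine ⟨H, ?_, hdeg, ?_⟩
  · intro u w h
    rcases (hHadj u w).mp h with rfl | rfl
    · exact hadje u
    · exact (hadje w).symm
  · intro v w hvw h1
    have hfix : e v = e.symm v := by
      by_contra hne
      rw [hnbrset v, Set.ncard_pair hne] at h1
      omega
    have hw : w = e v := by
      rcases (hHadj v w).mp hvw with rfl | h
      · rfl
      · rw [hfix, h, Equiv.symm_apply_apply]
    rw [hnbrset w, hw]
    have h1' : e (e v) = v := by
      conv_lhs => rw [hfix]
      exact Equiv.apply_symm_apply e v
    have h2' : e.symm (e v) = v := Equiv.symm_apply_apply e v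
    rw [h1', h2', Set.pair_eq_singleton, Set.ncard_singleton]

/-- A non-bipartite graph admits a 1-sum `[0,1]`-flow if and only if it has a `{1,2}`-factor,
i.e. a spanning subgraph each of whose components is a single edge or a cycle (equivalently,
every vertex has degree 1 or 2, and every neighbor of a degree-1 vertex has degree 1). -/
theorem stmt_15 {V : Type*} [Fintype V] [DecidableEq V] (G : SimpleGraph V) [DecidableRel G.Adj]
    (hnb : ¬ G.Colorable 2) :
    (∃ ω : Sym2 V → ℝ, (∀ e ∉ G.edgeSet, ω e = 0) ∧ (∀ e ∈ G.edgeSet, 0 ≤ ω e ∧ ω e ≤ 1) ∧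
        ∀ v, ∑ e ∈ G.incidenceFinset v, ω e = 1) ↔
      ∃ H : SimpleGraph V, H ≤ G ∧
        (∀ v, (H.neighborSet v).ncard = 1 ∨ (H.neighborSet v).ncard = 2) ∧
        (∀ v w, H.Adj v w → (H.neighborSet v).ncard = 1 → (H.neighborSet w).ncard = 1) := by
  constructor
  · rintro ⟨ω, h0, hbd, hsum⟩
    exact forward_dir G ω h0 hbd hsum
  · rintro ⟨H, hle, hdeg, hmatch⟩
    exact backward_dir G H hle hdeg hmatch
end

section
/- Let G be a bipartite graph. Then G admits a 1-sum flow with all values in [0,1] if and only if G has a perfect matching. -/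
/-- A bipartite graph admits a 1-sum `[0,1]`-flow if and only if it has a perfect matching. -/
theorem stmt_16 {V : Type*} [Fintype V] [DecidableEq V] (G : SimpleGraph V) [DecidableRel G.Adj]
    (hbip : G.Colorable 2) :
    (∃ ω : Sym2 V → ℝ, (∀ e ∉ G.edgeSet, ω e = 0) ∧ (∀ e ∈ G.edgeSet, 0 ≤ ω e ∧ ω e ≤ 1) ∧
        ∀ v, ∑ e ∈ G.incidenceFinset v, ω e = 1) ↔
      ∃ M : G.Subgraph, M.IsPerfectMatching := by
  classical
  obtain ⟨c⟩ := hbip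
  have fin2 : ∀ x : Fin 2, x = 0 ∨ x = 1 := by decide
  constructor
  · rintro ⟨ω, h0, h01, hsum⟩
    -- disjointness of incidence sets over an independent set of vertices
    have hdisj : ∀ s : Finset V, (∀ v ∈ s, ∀ w ∈ s, v ≠ w → ¬ G.Adj v w) →
        ∑ e ∈ s.biUnion (fun v => G.incidenceFinset v), ω e
          = ∑ v ∈ s, ∑ e ∈ G.incidenceFinset v, ω e := by
      intro s hs
      refine Finset.sum_biUnion ?_
      intro v hv w hw hvw
      simp only [Function.onFun]
      rw [Finset.disjoint_left]
      intro e hev hew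
      rw [SimpleGraph.mem_incidenceFinset] at hev hew
      have := G.incidenceSet_inter_incidenceSet_of_not_adj
        (hs v hv w hw hvw) hvw
      exact absurd (Set.mem_inter hev hew) (by rw [this]; exact Set.notMem_empty e)
    have hcount : ∀ s : Finset V, (∀ v ∈ s, ∀ w ∈ s, v ≠ w → ¬ G.Adj v w) →
        ∑ e ∈ s.biUnion (fun v => G.incidenceFinset v), ω e = (s.card : ℝ) := by
      intro s hs
      rw [hdisj s hs, Finset.sum_congr rfl (fun v _ => hsum v), Finset.sum_const,
        nsmul_eq_mul, mul_one]
    set A : Finset V := Finset.univ.filter (fun v => c v = 0) with hAdef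
    set B : Finset V := Finset.univ.filter (fun v => c v = 1) with hBdef
    have hmemA : ∀ v, v ∈ A ↔ c v = 0 := by intro v; simp [hAdef]
    have hmemB : ∀ v, v ∈ B ↔ c v = 1 := by intro v; simp [hBdef]
    have hAind : ∀ v ∈ A, ∀ w ∈ A, v ≠ w → ¬ G.Adj v w := by
      intro v hv w hw _ hadj
      exact c.valid hadj (by rw [(hmemA v).1 hv, (hmemA w).1 hw])
    have hBind : ∀ v ∈ B, ∀ w ∈ B, v ≠ w → ¬ G.Adj v w := by
      intro v hv w hw _ hadj
      exact c.valid hadj (by rw [(hmemB v).1 hv, (hmemB w).1 hw])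
    -- each edge is incident to exactly one vertex in each class
    have hcover : ∀ s : Finset V, (∀ e ∈ G.edgeSet, ∃ v ∈ s, v ∈ e) →
        s.biUnion (fun v => G.incidenceFinset v) = G.edgeFinset := by
      intro s hstot
      ext e
      simp only [Finset.mem_biUnion, SimpleGraph.mem_incidenceFinset,
        SimpleGraph.mem_edgeFinset]
      constructor
      · rintro ⟨v, _, he, _⟩; exact he
      · intro he
        obtain ⟨v, hv, hve⟩ := hstot e he
        exact ⟨v, hv, he, hve⟩
    have hAcover : ∀ e ∈ G.edgeSet, ∃ v ∈ A, v ∈ e := by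
      intro e he
      induction e with
      | _ x y =>
        rw [SimpleGraph.mem_edgeSet] at he
        have := c.valid he
        rcases fin2 (c x) with hx | hx
        · exact ⟨x, (hmemA x).2 hx, by simp⟩
        · rcases fin2 (c y) with hy | hy
          · exact ⟨y, (hmemA y).2 hy, by simp⟩
          · exact absurd (hx.trans hy.symm) this
    have hBcover : ∀ e ∈ G.edgeSet, ∃ v ∈ B, v ∈ e := by
      intro e he
      induction e with
      | _ x y =>
        rw [SimpleGraph.mem_edgeSet] at he
        have := c.valid he
        rcases fin2 (c x) with hx | hx
        · rcases fin2 (c y) with hy | hy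
          · exact absurd (hx.trans hy.symm) this
          · exact ⟨y, (hmemB y).2 hy, by simp⟩
        · exact ⟨x, (hmemB x).2 hx, by simp⟩
    have hcardAB : A.card = B.card := by
      have hA : (A.card : ℝ) = ∑ e ∈ G.edgeFinset, ω e := by
        rw [← hcover A hAcover, hcount A hAind]
      have hB : (B.card : ℝ) = ∑ e ∈ G.edgeFinset, ω e := by
        rw [← hcover B hBcover, hcount B hBind]
      exact_mod_cast hA.trans hB.symm
    -- Hall's condition
    have hall : ∀ s : Finset {v : V // c v = 0},
        s.card ≤ (s.biUnion (fun a => G.neighborFinset ↑a)).card := by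
      intro s
      set S : Finset V := s.image Subtype.val with hSdef
      have hScard : S.card = s.card :=
        Finset.card_image_of_injective s Subtype.val_injective
      have hSA : ∀ v ∈ S, c v = 0 := by
        intro v hv
        simp only [hSdef, Finset.mem_image] at hv
        obtain ⟨a, _, rfl⟩ := hv
        exact a.2
      set N : Finset V := S.biUnion (fun v => G.neighborFinset v) with hNdef
      have hbiu : s.biUnion (fun a => G.neighborFinset ↑a) = N := by
        rw [hNdef, hSdef, Finset.image_biUnion]
      have hNB : ∀ v ∈ N, c v = 1 := by
        intro v hv
        simp only [hNdef, Finset.mem_biUnion, SimpleGraph.mem_neighborFinset] at hv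
        obtain ⟨a, ha, hadj⟩ := hv
        rcases fin2 (c v) with h | h
        · exact absurd (h.trans (hSA a ha).symm) (c.valid hadj.symm)
        · exact h
      have hSind : ∀ v ∈ S, ∀ w ∈ S, v ≠ w → ¬ G.Adj v w := by
        intro v hv w hw _ hadj
        exact c.valid hadj (by rw [hSA v hv, hSA w hw])
      have hNind : ∀ v ∈ N, ∀ w ∈ N, v ≠ w → ¬ G.Adj v w := by
        intro v hv w hw _ hadj
        exact c.valid hadj (by rw [hNB v hv, hNB w hw])
      have hsubset : S.biUnion (fun v => G.incidenceFinset v) ⊆ N.biUnion (fun v => G.incidenceFinset v) := by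
        intro e he
        simp only [Finset.mem_biUnion, SimpleGraph.mem_incidenceFinset] at he ⊢
        obtain ⟨v, hv, he, hve⟩ := he
        refine ⟨Sym2.Mem.other hve, ?_, he, Sym2.other_mem hve⟩
        simp only [hNdef, Finset.mem_biUnion, SimpleGraph.mem_neighborFinset]
        refine ⟨v, hv, ?_⟩
        rw [← SimpleGraph.mem_edgeSet, Sym2.other_spec hve]
        exact he
      have key : (S.card : ℝ) ≤ (N.card : ℝ) := by
        rw [← hcount S hSind, ← hcount N hNind]
        refine Finset.sum_le_sum_of_subset_of_nonneg hsubset ?_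
        intro e he _
        simp only [Finset.mem_biUnion, SimpleGraph.mem_incidenceFinset] at he
        obtain ⟨v, _, he, _⟩ := he
        exact (h01 e he).1
      rw [hbiu, ← hScard]
      exact_mod_cast key
    obtain ⟨f, hfinj, hfmem⟩ :=
      (Finset.all_card_le_biUnion_card_iff_exists_injective
        (fun a : {v : V // c v = 0} => G.neighborFinset ↑a)).1 hall
    have hfadj : ∀ a : {v : V // c v = 0}, G.Adj ↑a (f a) := by
      intro a
      have := hfmem a
      rwa [SimpleGraph.mem_neighborFinset] at this
    have hfcol : ∀ a, c (f a) = 1 := by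
      intro a
      rcases fin2 (c (f a)) with h | h
      · exact absurd (h.trans a.2.symm) (c.valid (hfadj a).symm)
      · exact h
    -- f is surjective onto B
    have himg : Finset.univ.image (fun a : {v : V // c v = 0} => f a) = B := by
      refine Finset.eq_of_subset_of_card_le ?_ ?_
      · intro v hv
        simp only [Finset.mem_image] at hv
        obtain ⟨a, _, rfl⟩ := hv
        exact (hmemB _).2 (hfcol a)
      · rw [Finset.card_image_of_injective _ hfinj, ← hcardAB]
        have : Fintype.card {v : V // c v = 0} = A.card := Fintype.card_subtype _
        rw [Finset.card_univ, this]
    have hsurj : ∀ v, c v = 1 → ∃ a : {v : V // c v = 0}, f a = v := by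
      intro v hv
      have : v ∈ Finset.univ.image (fun a : {v : V // c v = 0} => f a) := by
        rw [himg]; exact (hmemB v).2 hv
      simp only [Finset.mem_image] at this
      obtain ⟨a, _, ha⟩ := this
      exact ⟨a, ha⟩
    -- build the matching
    refine ⟨{ verts := Set.univ
              Adj := fun x y => (∃ a : {v : V // c v = 0}, ↑a = x ∧ f a = y) ∨
                (∃ a : {v : V // c v = 0}, ↑a = y ∧ f a = x)
              adj_sub := by
                rintro x y (⟨a, rfl, rfl⟩ | ⟨a, rfl, rfl⟩)
                · exact hfadj a
                · exact (hfadj a).symm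
              edge_vert := fun _ => Set.mem_univ _
              symm := ⟨fun x y h => h.symm⟩ }, ?_⟩
    rw [SimpleGraph.Subgraph.isPerfectMatching_iff]
    intro v
    rcases fin2 (c v) with hv | hv
    · refine ⟨f ⟨v, hv⟩, Or.inl ⟨⟨v, hv⟩, rfl, rfl⟩, ?_⟩
      rintro w (⟨a, ha, rfl⟩ | ⟨a, ha, hfa⟩)
      · have : a = ⟨v, hv⟩ := Subtype.ext ha
        rw [this]
      · exact absurd ((hfcol a).symm.trans (hfa ▸ hv)) (by decide)
    · obtain ⟨a, hfa⟩ := hsurj v hv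
      refine ⟨↑a, Or.inr ⟨a, rfl, hfa⟩, ?_⟩
      rintro w (⟨a', ha', _⟩ | ⟨a', ha', hfa'⟩)
      · exact absurd (((ha' ▸ a'.2 : c v = 0)).symm.trans hv) (by decide)
      · have : a' = a := hfinj (hfa'.trans hfa.symm)
        rw [← ha', this]
  · rintro ⟨M, hM⟩
    rw [SimpleGraph.Subgraph.isPerfectMatching_iff] at hM
    refine ⟨fun e => if e ∈ M.edgeSet then 1 else 0, ?_, ?_, ?_⟩
    · intro e he
      dsimp only
      rw [if_neg (fun h => he (M.edgeSet_subset h))]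
    · intro e _
      dsimp only
      split <;> norm_num
    · intro v
      obtain ⟨w, hw, huniq⟩ := hM v
      have hfilter : (G.incidenceFinset v).filter (· ∈ M.edgeSet) = {s(v, w)} := by
        ext e
        simp only [Finset.mem_filter, SimpleGraph.mem_incidenceFinset,
          Finset.mem_singleton]
        constructor
        · rintro ⟨⟨_, hve⟩, heM⟩
          induction e with
          | _ x y =>
            rw [SimpleGraph.Subgraph.mem_edgeSet] at heM
            rcases Sym2.mem_iff.1 hve with rfl | rfl
            · rw [huniq y heM]
            · rw [huniq x heM.symm, Sym2.eq_swap]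
        · rintro rfl
          refine ⟨⟨M.adj_sub hw, Sym2.mem_mk_left v w⟩, ?_⟩
          rw [SimpleGraph.Subgraph.mem_edgeSet]
          exact hw
      dsimp only
      rw [← Finset.sum_filter, hfilter, Finset.sum_singleton]
end

section
/- Let k be an odd positive integer and G a connected k-regular graph. Then G admits a 1-sum flow with all edge values in {-1, 0, 1}. -/
open Finset

section aux

variable {V : Type*} [Fintype V] [DecidableEq V]

/-- Hall: a regular relation admits a permutation selecting related pairs. -/
lemma perm_of_regular_rel (R : V → V → Prop) [DecidableRel R] (m : ℕ) (hm : 0 < m)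
    (hrow : ∀ v, #(univ.filter (fun u => R v u)) = m)
    (hcol : ∀ u, #(univ.filter (fun v => R v u)) = m) :
    ∃ σ : Equiv.Perm V, ∀ v, R v (σ v) := by
  have hall : ∀ A : Finset V, A.card ≤ (A.biUnion fun v => univ.filter (fun u => R v u)).card := by
    intro A
    have h1 : A.card * m = ∑ a ∈ A, #(univ.filter (fun u => R a u)) := by
      simp [hrow, mul_comm]
    have h2 : ∑ a ∈ A, #(univ.filter (fun u => R a u))
        = ∑ u ∈ A.biUnion (fun v => univ.filter (fun u => R v u)), #(A.filter (fun a => R a u)) := by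
      calc ∑ a ∈ A, #(univ.filter (fun u => R a u))
          = ∑ a ∈ A, ∑ u ∈ (univ : Finset V), (if R a u then 1 else 0) := by
            refine Finset.sum_congr rfl fun a _ => ?_
            rw [Finset.card_filter]
        _ = ∑ u ∈ (univ : Finset V), ∑ a ∈ A, (if R a u then 1 else 0) := Finset.sum_comm
        _ = ∑ u ∈ A.biUnion (fun v => univ.filter (fun u => R v u)),
              ∑ a ∈ A, (if R a u then 1 else 0) := by
            refine (Finset.sum_subset (Finset.subset_univ _) ?_).symm
            intro u _ hu
            refine Finset.sum_eq_zero fun a ha => ?_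
            simp only [Finset.mem_biUnion, not_exists] at hu
            push_neg at hu
            have := hu a ha
            simp only [Finset.mem_filter, Finset.mem_univ, true_and] at this
            simp [this]
        _ = _ := by
            refine Finset.sum_congr rfl fun u _ => ?_
            rw [Finset.card_filter]
    have h3 : ∑ u ∈ A.biUnion (fun v => univ.filter (fun u => R v u)), #(A.filter (fun a => R a u))
        ≤ (A.biUnion fun v => univ.filter (fun u => R v u)).card * m := by
      rw [← smul_eq_mul, ← Finset.sum_const]
      refine Finset.sum_le_sum fun u _ => ?_
      rw [← hcol u]
      exact Finset.card_le_card (by intro a; simp +contextual)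
    have := h1.trans_le (h2.le.trans h3)
    exact Nat.le_of_mul_le_mul_right (by linarith [this]) hm
  obtain ⟨f, hinj, hf⟩ := (Finset.all_card_le_biUnion_card_iff_exists_injective _).mp hall
  refine ⟨Equiv.ofBijective f (Finite.injective_iff_bijective.mp hinj), fun v => ?_⟩
  have := hf v
  simp only [Finset.mem_filter, Finset.mem_univ, true_and] at this
  exact this

lemma exists_half_sets (G : SimpleGraph V) [DecidableRel G.Adj] (k : ℕ)
    (hreg : ∀ v, G.degree v = k) :
    ∀ r, r ≤ k → ∃ S : V → Finset V, (∀ v, S v ⊆ G.neighborFinset v) ∧ (∀ v, #(S v) = r) ∧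
      (∀ u, #(univ.filter (fun v => u ∈ S v)) = r) := by
  intro r
  induction r with
  | zero => exact fun _ => ⟨fun _ => ∅, by simp, by simp, by simp⟩
  | succ r ih =>
    intro hrk
    obtain ⟨S, hsub, hcard, hcol⟩ := ih (Nat.le_of_succ_le hrk)
    have hcolG : ∀ u, #(univ.filter (fun v => G.Adj v u)) = k := by
      intro u
      have : univ.filter (fun v => G.Adj v u) = G.neighborFinset u := by
        ext v; simp [SimpleGraph.mem_neighborFinset, G.adj_comm]
      rw [this, SimpleGraph.card_neighborFinset_eq_degree, hreg u]
    set R : V → V → Prop := fun v u => G.Adj v u ∧ u ∉ S v with hR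
    have hrow : ∀ v, #(univ.filter (fun u => R v u)) = k - r := by
      intro v
      have : univ.filter (fun u => R v u) = G.neighborFinset v \ S v := by
        ext u; simp [hR, SimpleGraph.mem_neighborFinset, and_comm]
      rw [this, Finset.card_sdiff_of_subset (hsub v), hcard v, SimpleGraph.card_neighborFinset_eq_degree,
        hreg v]
    have hcolR : ∀ u, #(univ.filter (fun v => R v u)) = k - r := by
      intro u
      have : univ.filter (fun v => R v u)
          = univ.filter (fun v => G.Adj v u) \ univ.filter (fun v => u ∈ S v) := by
        ext v
        simp only [Finset.mem_filter, Finset.mem_univ, true_and, Finset.mem_sdiff, hR]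
      rw [this, Finset.card_sdiff_of_subset, hcol u, hcolG u]
      intro v hv
      simp only [Finset.mem_filter, Finset.mem_univ, true_and] at hv ⊢
      exact (SimpleGraph.mem_neighborFinset G v u).mp (hsub v hv)
    obtain ⟨σ, hσ⟩ := perm_of_regular_rel R (k - r) (by omega) hrow hcolR
    refine ⟨fun v => insert (σ v) (S v), ?_, ?_, ?_⟩
    · intro v
      refine Finset.insert_subset ?_ (hsub v)
      exact (SimpleGraph.mem_neighborFinset G v (σ v)).mpr (hσ v).1
    · intro v
      rw [Finset.card_insert_of_notMem (hσ v).2, hcard v]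
    · intro u
      have heq : univ.filter (fun v => u ∈ insert (σ v) (S v))
          = insert (σ.symm u) (univ.filter (fun v => u ∈ S v)) := by
        ext v
        simp only [Finset.mem_filter, Finset.mem_univ, true_and, Finset.mem_insert]
        constructor
        · rintro (h | h)
          · left; rw [h]; exact (Equiv.symm_apply_apply σ v).symm
          · right; exact h
        · rintro (h | h)
          · left; subst h; simp
          · right; exact h
      rw [heq, Finset.card_insert_of_notMem, hcol u]
      simp only [Finset.mem_filter, Finset.mem_univ, true_and]
      have := (hσ (σ.symm u)).2
      simpa using this

end aux

/-- Every connected `k`-regular graph with `k` odd admits a 1-sum `{-1,0,1}`-flow. -/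
theorem stmt_18 {V : Type*} [Fintype V] [DecidableEq V] (G : SimpleGraph V) [DecidableRel G.Adj]
    (k : ℕ) (hk : 0 < k) (hodd : Odd k) (hconn : G.Connected) (hreg : ∀ v, G.degree v = k) :
    ∃ ω : Sym2 V → ℝ, (∀ e ∈ G.edgeSet, ω e = -1 ∨ ω e = 0 ∨ ω e = 1) ∧
      ∀ v, ∑ e ∈ G.incidenceFinset v, ω e = 1 := by
  obtain ⟨t, ht⟩ := hodd
  set r := t + 1 with hr
  have hrk : r ≤ k := by omega
  obtain ⟨S, hsub, hcard, hcol⟩ := exists_half_sets G k hreg r hrk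
  set f : V → V → ℝ := fun u v => (if v ∈ S u then (1:ℝ) else 0) + (if u ∈ S v then 1 else 0) - 1
    with hf
  have hsym : ∀ u v, f u v = f v u := by intro u v; simp only [hf]; ring
  refine ⟨Sym2.lift ⟨f, hsym⟩, ?_, ?_⟩
  · intro e _
    induction e with
    | _ u v =>
      simp only [Sym2.lift_mk, hf]
      split_ifs <;> norm_num
  · intro v
    have hinc : G.incidenceFinset v = (G.neighborFinset v).image (fun u => s(v, u)) := by
      ext e
      induction e with
      | _ a b =>
        simp only [SimpleGraph.mem_incidenceFinset, SimpleGraph.mk'_mem_incidenceSet_iff,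
          Finset.mem_image, SimpleGraph.mem_neighborFinset]
        constructor
        · rintro ⟨hadj, (rfl | rfl)⟩
          · exact ⟨b, hadj, rfl⟩
          · exact ⟨a, G.adj_symm hadj, Sym2.eq_swap⟩
        · rintro ⟨u, hu, he⟩
          rcases Sym2.eq_iff.mp he with ⟨h1, h2⟩ | ⟨h1, h2⟩
          · subst h1; subst h2; exact ⟨hu, Or.inl rfl⟩
          · subst h1; subst h2; exact ⟨G.adj_symm hu, Or.inr rfl⟩
    rw [hinc, Finset.sum_image]
    · have hlift : ∑ u ∈ G.neighborFinset v, Sym2.lift ⟨f, hsym⟩ s(v, u)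
          = ∑ u ∈ G.neighborFinset v, f v u := by
        refine Finset.sum_congr rfl fun u _ => ?_
        simp
      rw [hlift]
      have h1 : ∑ u ∈ G.neighborFinset v, (if u ∈ S v then (1:ℝ) else 0) = (r : ℝ) := by
        rw [Finset.sum_boole]
        rw [Finset.filter_mem_eq_inter, Finset.inter_eq_right.mpr (hsub v)]
        rw [hcard v]
      have h2 : ∑ u ∈ G.neighborFinset v, (if v ∈ S u then (1:ℝ) else 0) = (r : ℝ) := by
        rw [Finset.sum_boole]
        have : (G.neighborFinset v).filter (fun u => v ∈ S u)
            = univ.filter (fun u => v ∈ S u) := by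
          ext u
          simp only [Finset.mem_filter, Finset.mem_univ, true_and,
            SimpleGraph.mem_neighborFinset, and_iff_right_iff_imp]
          intro hu
          exact G.adj_symm ((SimpleGraph.mem_neighborFinset G u v).mp (hsub u hu))
        rw [this, hcol v]
      have h3 : ∑ u ∈ G.neighborFinset v, (1:ℝ) = (k : ℝ) := by
        simp [hreg v]
      simp only [hf, Finset.sum_sub_distrib, Finset.sum_add_distrib, h1, h2, h3]
      have hkr : (k : ℝ) = 2 * t + 1 := by exact_mod_cast congrArg Nat.cast ht
      rw [hkr]
      push_cast [hr]
      ring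
    · intro a _ b _ hab
      rcases Sym2.eq_iff.mp hab with ⟨_, h⟩ | ⟨h1, h2⟩
      · exact h
      · rw [← h1, h2]
end

section
/- For all positive integers t and s, there exists an s-edge-connected bipartite graph G that admits a 1-sum R-flow but admits no 1-sum flow with all edge values ≥ -t. Specifically, take two disjoint copies of K_{s, s(1+t)+1} with parts (X,Y) and (X',Y'), |X|=|X'|=s, and join one vertex v ∈ X to all s vertices of X'; this graph has no 1-sum [-t,∞)-flow. -/
open Sym2 SimpleGraph Sum

namespace Stmt19

abbrev V (s m : ℕ) := Bool × (Fin s ⊕ Fin m)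

def rel (s m : ℕ) : V s m → V s m → Prop := fun a b =>
  (a.1 = b.1 ∧ a.2.isLeft ∧ b.2.isRight) ∨ (a.1 ≠ b.1 ∧ a.2 = b.2 ∧ a.2.isLeft)

def H (s m : ℕ) : SimpleGraph (V s m) := SimpleGraph.fromRel (rel s m)

variable {s m : ℕ}

lemma adj_inl_inr (c : Bool) (i : Fin s) (j : Fin m) :
    (H s m).Adj (c, inl i) (c, inr j) := by
  simp [H, SimpleGraph.fromRel_adj, rel]

lemma adj_bridge (i : Fin s) {c c' : Bool} (h : c ≠ c') :
    (H s m).Adj (c, inl i) (c', inl i) := by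
  simp [H, SimpleGraph.fromRel_adj, rel, Prod.ext_iff, h]

lemma nadj_inl_inl_same (c : Bool) (i i' : Fin s) :
    ¬ (H s m).Adj (c, inl i) (c, inl i') := by
  simp [H, SimpleGraph.fromRel_adj, rel]

lemma nadj_inl_inl_ne {c c' : Bool} {i i' : Fin s} (h : i ≠ i') :
    ¬ (H s m).Adj (c, inl i) (c', inl i') := by
  simp [H, SimpleGraph.fromRel_adj, rel, h, h.symm]

lemma nadj_inr_inr (c c' : Bool) (j j' : Fin m) :
    ¬ (H s m).Adj (c, inr j) (c', inr j') := by
  simp [H, SimpleGraph.fromRel_adj, rel]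

lemma nadj_cross {c c' : Bool} (h : c ≠ c') (i : Fin s) (j : Fin m) :
    ¬ (H s m).Adj (c, inl i) (c', inr j) := by
  simp [H, SimpleGraph.fromRel_adj, rel, h]


/-- The symmetric edge-weight function. -/
noncomputable def fl (s t m : ℕ) : V s m → V s m → ℝ := fun a b =>
  if a.1 = b.1 then
    (if (a.2.isLeft ∧ b.2.isRight) ∨ (a.2.isRight ∧ b.2.isLeft) then 1/(s:ℝ) else 0)
  else
    (if a.2 = b.2 ∧ a.2.isLeft then -((s:ℝ)*t+1)/s else 0)

lemma fl_symm (s t m : ℕ) : ∀ a b : V s m, fl s t m a b = fl s t m b a := by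
  rintro ⟨c, z⟩ ⟨c', z'⟩
  unfold fl
  by_cases h : c = c'
  · subst h; simp [or_comm, and_comm]
  · simp [h, Ne.symm h]
    rcases z with i | j <;> rcases z' with i' | j' <;>
      simp [eq_comm]

noncomputable def Ω (s t m : ℕ) : Sym2 (V s m) → ℝ := Sym2.lift ⟨fl s t m, fl_symm s t m⟩

@[simp] lemma Ω_pair (a b : V s m) {t : ℕ} : Ω s t m s(a, b) = fl s t m a b := rfl

lemma Ω_support {t : ℕ} (e : Sym2 (V s m)) (he : e ∉ (H s m).edgeSet) : Ω s t m e = 0 := by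
  induction e using Sym2.ind with
  | _ a b =>
    rw [SimpleGraph.mem_edgeSet] at he
    obtain ⟨c, z⟩ := a; obtain ⟨c', z'⟩ := b
    simp only [H, SimpleGraph.fromRel_adj, rel, not_and, not_or] at he
    rw [Ω_pair]
    unfold fl
    by_cases h : c = c'
    · subst h
      by_cases hz : z = z'
      · subst hz; rcases z with i | j <;> simp
      · have := he (by simp [Prod.ext_iff, hz])
        rcases z with i | j <;> rcases z' with i' | j' <;> simp_all
    · have : (c, z) ≠ (c', z') := by simp [Prod.ext_iff, h]
      have h2 := he this
      rcases z with i | j <;> rcases z' with i' | j' <;> simp_all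

lemma fl_row_sum {t : ℕ} (hs : 0 < s) (hm : m = s*t + s + 1) (v : V s m) :
    ∑ w : V s m, fl s t m v w = 1 := by
  obtain ⟨c, z⟩ := v
  rw [Fintype.sum_prod_type]
  have hsum : ∀ c' : Bool, ∑ z' : Fin s ⊕ Fin m, fl s t m (c, z) (c', z')
      = ∑ i : Fin s, fl s t m (c, z) (c', inl i) + ∑ j : Fin m, fl s t m (c, z) (c', inr j) := by
    intro c'
    rw [Fintype.sum_sum_type]
  have hs' : (s:ℝ) ≠ 0 := Nat.cast_ne_zero.mpr hs.ne'
  rcases z with i | j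
  · -- v = (c, inl i)
    rw [Fintype.sum_bool, hsum, hsum]
    have key : ∀ c' : Bool, c ≠ c' →
        (∑ i' : Fin s, fl s t m (c, inl i) (c', inl i') = -((s:ℝ)*t+1)/s
        ∧ ∑ j : Fin m, fl s t m (c, inl i) (c', inr j) = 0) := by
      intro c' hc
      constructor
      · rw [Finset.sum_eq_single i]
        · simp [fl, hc]
        · intro i' _ hne
          simp [fl, hc, Sum.inl.injEq, hne.symm]
        · simp
      · apply Finset.sum_eq_zero; intro j _; simp [fl, hc]
    have key2 : (∑ i' : Fin s, fl s t m (c, inl i) (c, inl i') = 0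
        ∧ ∑ j : Fin m, fl s t m (c, inl i) (c, inr j) = m * (1/(s:ℝ))) := by
      constructor
      · apply Finset.sum_eq_zero; intro i' _; simp [fl]
      · rw [show (∑ j : Fin m, fl s t m (c, inl i) (c, inr j)) = ∑ _j : Fin m, 1/(s:ℝ)
            from Finset.sum_congr rfl (fun j _ => by simp [fl])]
        rw [Finset.sum_const, Finset.card_univ, Fintype.card_fin, nsmul_eq_mul]
    rcases c with _ | _
    · rw [(key true (by simp)).1, (key true (by simp)).2, key2.1, key2.2]
      rw [hm]; push_cast; field_simp; ring
    · rw [(key false (by simp)).1, (key false (by simp)).2, key2.1, key2.2]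
      rw [hm]; push_cast; field_simp; ring
  · -- v = (c, inr j)
    rw [Fintype.sum_bool, hsum, hsum]
    have key : ∀ c' : Bool, c ≠ c' →
        (∑ i : Fin s, fl s t m (c, inr j) (c', inl i) = 0
        ∧ ∑ j' : Fin m, fl s t m (c, inr j) (c', inr j') = 0) := by
      intro c' hc
      constructor <;> (apply Finset.sum_eq_zero; intro x _; simp [fl, hc])
    have key2 : (∑ i : Fin s, fl s t m (c, inr j) (c, inl i) = s * (1/(s:ℝ))
        ∧ ∑ j' : Fin m, fl s t m (c, inr j) (c, inr j') = 0) := by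
      constructor
      · rw [show (∑ i : Fin s, fl s t m (c, inr j) (c, inl i)) = ∑ _i : Fin s, 1/(s:ℝ)
            from Finset.sum_congr rfl (fun i _ => by simp [fl])]
        rw [Finset.sum_const, Finset.card_univ, Fintype.card_fin, nsmul_eq_mul]
      · apply Finset.sum_eq_zero; intro j' _; simp [fl]
    rcases c with _ | _
    · rw [(key true (by simp)).1, (key true (by simp)).2, key2.1, key2.2]
      field_simp; norm_num
    · rw [(key false (by simp)).1, (key false (by simp)).2, key2.1, key2.2]
      field_simp; norm_num

lemma le_ncard_of_inj {k : ℕ} {β : Type*} {F : Set β} (hF : F.Finite) (f : Fin k → β)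
    (hf : Function.Injective f) (hmem : ∀ x, f x ∈ F) : k ≤ F.ncard := by
  have hsub : Set.range f ⊆ F := by rintro _ ⟨x, rfl⟩; exact hmem x
  have hcard : (Set.range f).ncard = k := by
    rw [← Nat.card_coe_set_eq, Nat.card_range_of_injective hf, Nat.card_eq_fintype_card,
      Fintype.card_fin]
  exact hcard ▸ Set.ncard_le_ncard hsub hF

lemma H_del_connected {F : Set (Sym2 (V s m))} (hs : 0 < s) (hsm : s ≤ m)
    (hF : F.ncard < s) : ((H s m).deleteEdges F).Connected := by
  classical
  have hFfin : F.Finite := Set.toFinite F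
  set D := (H s m).deleteEdges F with hD
  have claim3 : ∀ (c : Bool) (i : Fin s), ∃ j : Fin m,
      s((c, inl i), ((c, inr j) : V s m)) ∉ F := by
    intro c i
    by_contra hcon
    push_neg at hcon
    have := le_ncard_of_inj hFfin (fun j : Fin m => s((c, inl i), ((c, inr j) : V s m)))
      (fun j j' h => by
        simp [Sym2.eq_iff, Prod.ext_iff] at h
        tauto) hcon
    omega
  have claim2 : ∀ (c : Bool) (j j' : Fin m), ∃ i : Fin s,
      s((c, inl i), ((c, inr j) : V s m)) ∉ F ∧ s((c, inl i), ((c, inr j') : V s m)) ∉ F := by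
    intro c j j'
    by_contra hcon
    push_neg at hcon
    set g : Fin s → Sym2 (V s m) := fun i =>
      if s((c, inl i), ((c, inr j) : V s m)) ∈ F then s((c, inl i), ((c, inr j) : V s m))
      else s((c, inl i), ((c, inr j') : V s m)) with hg
    have hform : ∀ i, ∃ jj, g i = s((c, inl i), ((c, inr jj) : V s m)) := by
      intro i; by_cases h : s((c, inl i), ((c, inr j) : V s m)) ∈ F
      · exact ⟨j, by simp [hg, h]⟩
      · exact ⟨j', by simp [hg, h]⟩
    have hmem : ∀ i, g i ∈ F := by
      intro i; by_cases h : s((c, inl i), ((c, inr j) : V s m)) ∈ F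
      · simp only [hg]; rwa [if_pos h]
      · have h2 := hcon i h
        simp only [hg]; rwa [if_neg h]
    have hinj : Function.Injective g := by
      intro i i' h
      obtain ⟨a, ha⟩ := hform i
      obtain ⟨b, hb⟩ := hform i'
      rw [ha, hb] at h
      simp [Sym2.eq_iff, Prod.ext_iff] at h
      tauto
    have := le_ncard_of_inj hFfin g hinj hmem
    omega
  have claim1 : ∃ i0 : Fin s, s(((false, inl i0) : V s m), (true, inl i0)) ∉ F := by
    by_contra hcon
    push_neg at hcon
    have := le_ncard_of_inj hFfin
      (fun i : Fin s => s(((false, inl i) : V s m), (true, inl i)))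
      (fun i i' h => by
        simp [Sym2.eq_iff, Prod.ext_iff] at h
        tauto) hcon
    omega
  have hadj : ∀ a b : V s m, (H s m).Adj a b → s(a, b) ∉ F → D.Adj a b := by
    intro a b h1 h2
    rw [hD, SimpleGraph.deleteEdges_adj]
    exact ⟨h1, h2⟩
  have reach_rr : ∀ (c : Bool) (j j' : Fin m), D.Reachable (c, inr j) (c, inr j') := by
    intro c j j'
    obtain ⟨i, h1, h2⟩ := claim2 c j j'
    have a1 : D.Adj (c, inr j) (c, inl i) :=
      hadj _ _ (adj_inl_inr c i j).symm (by rwa [Sym2.eq_swap])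
    have a2 : D.Adj (c, inl i) (c, inr j') := hadj _ _ (adj_inl_inr c i j') h2
    exact a1.reachable.trans a2.reachable
  have reach_lr : ∀ (c : Bool) (i : Fin s) (j : Fin m), D.Reachable (c, inl i) (c, inr j) := by
    intro c i j
    obtain ⟨j', h1⟩ := claim3 c i
    exact ((hadj _ _ (adj_inl_inr c i j') h1).reachable).trans (reach_rr c j' j)
  have reach_same : ∀ (c : Bool) (z z' : Fin s ⊕ Fin m), D.Reachable (c, z) (c, z') := by
    have j0 : Fin m := ⟨0, lt_of_lt_of_le hs hsm⟩
    intro c z z'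
    rcases z with i | j <;> rcases z' with i' | j'
    · exact (reach_lr c i j0).trans (reach_lr c i' j0).symm
    · exact reach_lr c i j'
    · exact (reach_lr c i' j).symm
    · exact reach_rr c j j'
  rw [SimpleGraph.connected_iff]
  refine ⟨?_, ⟨(false, inl ⟨0, hs⟩)⟩⟩
  intro a b
  obtain ⟨i0, hi0⟩ := claim1
  have bridge : D.Adj (false, inl i0) (true, inl i0) :=
    hadj _ _ (adj_bridge i0 (by simp)) hi0
  have rb : ∀ cc cc' : Bool, cc ≠ cc' → D.Reachable (cc, inl i0) (cc', inl i0) := by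
    intro cc cc' hne
    cases cc <;> cases cc' <;>
      first
        | exact absurd rfl hne
        | exact bridge.reachable
        | exact bridge.reachable.symm
  obtain ⟨c, z⟩ := a; obtain ⟨c', z'⟩ := b
  by_cases h : c = c'
  · subst h; exact reach_same c z z'
  · exact (reach_same c z (inl i0)).trans ((rb c c' h).trans (reach_same c' (inl i0) z'))


lemma no_bounded_flow {t : ℕ} (hs : 0 < s) (hm : m = s*t + s + 1)
    (ω : Sym2 (V s m) → ℝ)
    (h0 : ∀ e ∉ (H s m).edgeSet, ω e = 0)
    (hlb : ∀ e ∈ (H s m).edgeSet, -(t:ℝ) ≤ ω e)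
    (hsum : ∀ v : V s m, ∑ w : V s m, ω s(v, w) = 1) : False := by
  classical
  have hz : ∀ a b : V s m, ¬ (H s m).Adj a b → ω s(a, b) = 0 := fun a b h =>
    h0 _ (by rwa [SimpleGraph.mem_edgeSet])
  have rowInl : ∀ i : Fin s, (∑ j : Fin m, ω s(((true, inl i) : V s m), (true, inr j)))
      + ω s(((true, inl i) : V s m), (false, inl i)) = 1 := by
    intro i
    have hv := hsum (true, inl i)
    rw [Fintype.sum_prod_type, Fintype.sum_bool, Fintype.sum_sum_type, Fintype.sum_sum_type] at hv
    rw [Finset.sum_eq_zero (fun i' _ => hz _ _ (nadj_inl_inl_same true i i'))] at hv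
    rw [Finset.sum_eq_zero (fun j' _ => hz _ _ (nadj_cross (show (true:Bool) ≠ false by simp) i j'))] at hv
    rw [Finset.sum_eq_single i
      (fun i' _ hne => hz (true, inl i) (false, inl i') (nadj_inl_inl_ne hne.symm))
      (by simp)] at hv
    linarith
  have rowInr : ∀ j : Fin m, (∑ i : Fin s, ω s(((true, inr j) : V s m), (true, inl i))) = 1 := by
    intro j
    have hv := hsum (true, inr j)
    rw [Fintype.sum_prod_type, Fintype.sum_bool, Fintype.sum_sum_type, Fintype.sum_sum_type] at hv
    rw [Finset.sum_eq_zero (fun j' _ => hz _ _ (nadj_inr_inr true true j j'))] at hv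
    rw [Finset.sum_eq_zero (fun i' _ => hz _ _
      (fun h => nadj_cross (show (false : Bool) ≠ true by simp) i' j h.symm))] at hv
    rw [Finset.sum_eq_zero (fun j' _ => hz _ _ (nadj_inr_inr true false j j'))] at hv
    linarith
  have h1 : (∑ i : Fin s, ((∑ j : Fin m, ω s(((true, inl i) : V s m), (true, inr j)))
      + ω s(((true, inl i) : V s m), (false, inl i)))) = (s : ℝ) := by
    rw [Finset.sum_congr rfl fun i _ => rowInl i]; simp
  have h2 : (∑ j : Fin m, ∑ i : Fin s, ω s(((true, inr j) : V s m), (true, inl i))) = (m : ℝ) := by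
    rw [Finset.sum_congr rfl fun j _ => rowInr j]; simp
  have hswap : (∑ j : Fin m, ∑ i : Fin s, ω s(((true, inr j) : V s m), (true, inl i)))
      = ∑ i : Fin s, ∑ j : Fin m, ω s(((true, inl i) : V s m), (true, inr j)) := by
    rw [Finset.sum_comm]
    exact Finset.sum_congr rfl fun i _ => Finset.sum_congr rfl fun j _ => by rw [Sym2.eq_swap]
  rw [Finset.sum_add_distrib] at h1
  rw [hswap] at h2
  have hB : (∑ i : Fin s, ω s(((true, inl i) : V s m), (false, inl i))) = (s : ℝ) - m := by
    linarith
  have hlow : (∑ i : Fin s, (-(t:ℝ))) ≤ ∑ i : Fin s, ω s(((true, inl i) : V s m), (false, inl i)) :=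
    Finset.sum_le_sum fun i _ => hlb _ (by rw [SimpleGraph.mem_edgeSet]; exact adj_bridge i (by simp))
  rw [Finset.sum_const, Finset.card_univ, Fintype.card_fin, nsmul_eq_mul, hB] at hlow
  rw [hm] at hlow
  push_cast at hlow
  nlinarith [hlow]


def col : V s m → Fin 2 := fun p =>
  if p.2.isLeft then (if p.1 then 0 else 1) else (if p.1 then 1 else 0)

lemma col_valid {a b : V s m} (h : (H s m).Adj a b) : col a ≠ col b := by
  obtain ⟨c, z⟩ := a; obtain ⟨c', z'⟩ := b
  simp only [H, SimpleGraph.fromRel_adj, rel] at h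
  rcases z with i | j <;> rcases z' with i' | j' <;> rcases c <;> rcases c' <;>
    simp_all [col]

lemma sum_sym2 {β : Type*} [Fintype β] [DecidableEq β] (ω : Sym2 β → ℝ) (v : β) :
    ∑ e : Sym2 β, (if v ∈ e then ω e else 0) = ∑ u : β, ω s(v, u) := by
  classical
  have h1 : ∑ e : Sym2 β, (if v ∈ e then ω e else 0)
      = ∑ e ∈ Finset.univ.filter (fun e => v ∈ e), ω e := by
    rw [Finset.sum_filter]
  have hinj : ∀ a ∈ (Finset.univ : Finset β), ∀ b ∈ Finset.univ,
      s(v, a) = s(v, b) → a = b := by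
    intro a _ b _ h
    simp [Sym2.eq_iff] at h
    aesop
  have h2 : ∑ u : β, ω s(v, u)
      = ∑ e ∈ (Finset.univ : Finset β).image (fun u => s(v, u)), ω e :=
    (Finset.sum_image hinj).symm
  rw [h1, h2]
  congr 1
  ext e
  simp only [Finset.mem_image, Finset.mem_filter, Finset.mem_univ, true_and]
  constructor
  · induction e using Sym2.ind with
    | _ a b =>
      intro h
      rw [Sym2.mem_iff] at h
      rcases h with rfl | rfl
      · exact ⟨b, rfl⟩
      · exact ⟨a, Sym2.eq_swap⟩
  · rintro ⟨u, rfl⟩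
    simp


end Stmt19

open Stmt19 Sum in
/-- For all positive integers `t` and `s`, there is an `s`-edge-connected bipartite graph
which admits a 1-sum ℝ-flow but admits no 1-sum flow with all edge values `≥ -t`. -/
theorem stmt_19 (t s : ℕ) (ht : 0 < t) (hs : 0 < s) :
    ∃ (N : ℕ) (G : SimpleGraph (Fin N)),
      G.Colorable 2 ∧
      (∀ F : Set (Sym2 (Fin N)), F.ncard < s → (G.deleteEdges F).Connected) ∧
      (∃ ω : Sym2 (Fin N) → ℝ, (∀ e ∉ G.edgeSet, ω e = 0) ∧
        ∀ v, ∑ e : Sym2 (Fin N), (if v ∈ e then ω e else 0) = 1) ∧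
      ¬ ∃ ω : Sym2 (Fin N) → ℝ, (∀ e ∉ G.edgeSet, ω e = 0) ∧
        (∀ e ∈ G.edgeSet, -(t : ℝ) ≤ ω e) ∧
        ∀ v, ∑ e : Sym2 (Fin N), (if v ∈ e then ω e else 0) = 1 := by
  classical
  set m : ℕ := s * t + s + 1 with hm
  set N : ℕ := 2 * (s + m) with hN
  have hcard : Fintype.card (V s m) = N := by
    simp [V, hN, Fintype.card_prod, Fintype.card_sum]
  have φ : Fin N ≃ V s m := (Fintype.equivFinOfCardEq hcard).symm
  set G : SimpleGraph (Fin N) := (H s m).comap ⇑φ with hG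
  have hadjG : ∀ x y : Fin N, G.Adj x y ↔ (H s m).Adj (φ x) (φ y) := fun x y => Iff.rfl
  have hedge : ∀ e : Sym2 (Fin N), e ∈ G.edgeSet ↔ Sym2.map ⇑φ e ∈ (H s m).edgeSet := by
    intro e
    induction e using Sym2.ind with
    | _ a b =>
      rw [Sym2.map_pair_eq, SimpleGraph.mem_edgeSet, SimpleGraph.mem_edgeSet]
      exact hadjG a b
  have hmm : ∀ e' : Sym2 (V s m), Sym2.map ⇑φ (Sym2.map ⇑φ.symm e') = e' := by
    intro e'
    rw [Sym2.map_map]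
    simp [Equiv.self_comp_symm]
  refine ⟨N, G, ?_, ?_, ?_, ?_⟩
  · -- colorable
    exact ⟨SimpleGraph.Coloring.mk (fun x => col (φ x)) (fun hab => col_valid hab)⟩
  · -- connectivity
    intro F hF
    have hinj : Function.Injective (Sym2.map ⇑φ) := Sym2.map.injective φ.injective
    have hH : ((H s m).deleteEdges (Sym2.map ⇑φ '' F)).Connected :=
      H_del_connected hs (by omega)
        (by rwa [Set.ncard_image_of_injective F hinj])
    have hmem : ∀ x y : Fin N, (s(φ x, φ y) ∈ Sym2.map ⇑φ '' F ↔ s(x, y) ∈ F) := by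
      intro x y
      rw [← Sym2.map_pair_eq]
      exact ⟨fun h => by
        obtain ⟨e, he, heq⟩ := h
        rwa [← hinj heq], fun h => ⟨s(x, y), h, rfl⟩⟩
    have hEq : G.deleteEdges F = ((H s m).deleteEdges (Sym2.map ⇑φ '' F)).comap ⇑φ := by
      ext x y
      simp only [hG, SimpleGraph.deleteEdges_adj, SimpleGraph.comap_adj, hmem]
    rw [hEq]
    have iso : (((H s m).deleteEdges (Sym2.map ⇑φ '' F)).comap ⇑φ)
        ≃g ((H s m).deleteEdges (Sym2.map ⇑φ '' F)) :=
      SimpleGraph.Iso.comap φ ((H s m).deleteEdges (Sym2.map ⇑φ '' F))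
    exact iso.connected_iff.mpr hH
  · -- flow exists
    refine ⟨fun e => Ω s t m (Sym2.map ⇑φ e), ?_, ?_⟩
    · intro e he
      exact Ω_support _ (fun hc => he ((hedge e).mpr hc))
    · intro v
      rw [sum_sym2]
      have hterm : ∀ u : Fin N, Ω s t m (Sym2.map ⇑φ s(v, u)) = fl s t m (φ v) (φ u) := by
        intro u; rw [Sym2.map_pair_eq]; rfl
      rw [Finset.sum_congr rfl fun u _ => hterm u]
      rw [show (∑ u : Fin N, fl s t m (φ v) (φ u)) = ∑ w : V s m, fl s t m (φ v) w from
        Equiv.sum_comp φ (fun w => fl s t m (φ v) w)]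
      exact fl_row_sum hs hm (φ v)
  · -- no bounded flow
    rintro ⟨ω, hsupp, hlbω, hsumω⟩
    apply no_bounded_flow hs hm (fun e => ω (Sym2.map ⇑φ.symm e))
    · intro e' he'
      apply hsupp
      intro hc
      exact he' (by rw [← hmm e']; exact (hedge _).mp hc)
    · intro e' he'
      apply hlbω
      rw [hedge, hmm]
      exact he'
    · intro v'
      have hterm : ∀ w : V s m, ω (Sym2.map ⇑φ.symm s(v', w))
          = ω s(φ.symm v', φ.symm w) := by
        intro w; rw [Sym2.map_pair_eq]
      calc ∑ w : V s m, ω (Sym2.map ⇑φ.symm s(v', w))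
          = ∑ w : V s m, ω s(φ.symm v', φ.symm w) :=
            Finset.sum_congr rfl fun w _ => hterm w
        _ = ∑ u : Fin N, ω s(φ.symm v', u) :=
            Equiv.sum_comp φ.symm (fun u => ω s(φ.symm v', u))
        _ = 1 := by rw [← sum_sym2]; exact hsumω (φ.symm v')
end
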